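/- arXiv:1410.4753 — 2 statements merged into one kernel-verified Lean document; each statement's English description precedes it below -/
import Mathlib

section
/- With the standing labeled-subshift setup, the maps 𝓜 ↦ x[𝓜] and 𝓜 ↦ x₊[𝓜] from the space of labels 𝓛𝓐𝓑 into {0,1}^ℤ are injective and continuous, and hence are homeomorphisms onto their images. -/
open Filter Topology

/-- `k : ℤ → ℤ` is `b`-expanding: `k(−n) = −k(n)` and `k(n+1) > b·Σ_{i=0}^{n} k(i)` for all
`n ≥ 0`. -/
def IsExpanding (b : ℕ) (k : ℤ → ℤ) : Prop :=
  (∀ n : ℤ, k (-n) = - k n) ∧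
  ∀ n : ℕ, (b : ℤ) * ∑ i ∈ Finset.range (n + 1), k (i : ℤ) < k ((n : ℤ) + 1)

/-- `j : Fin r → ℤ` is an expansion of `t`: nonzero entries with strictly decreasing absolute
values whose `k`-values sum to `t`. -/
def IsExpansion (k : ℤ → ℤ) (t : ℤ) (r : ℕ) (j : Fin r → ℤ) : Prop :=
  (∀ i : Fin r, j i ≠ 0) ∧ (∀ i₁ i₂ : Fin r, i₁ < i₂ → |j i₂| < |j i₁|) ∧
  t = ∑ i : Fin r, k (j i)

/-- `IP(k)`: the set of sums of finite subsets of the image set `k(ℤ)`. -/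
def IPk (k : ℤ → ℤ) : Set ℤ :=
  {t | ∃ F : Finset ℤ, ↑F ⊆ Set.range k ∧ t = ∑ x ∈ F, x}

/-- `IP₊(k)`: the set of sums of finite subsets of the image set `k(ℕ)` (positive arguments). -/
def IPkP (k : ℤ → ℤ) : Set ℤ :=
  {t | ∃ F : Finset ℤ, ↑F ⊆ k '' {j : ℤ | 0 < j} ∧ t = ∑ x ∈ F, x}

/-- A label: a hereditary set of ℕ-vectors (finitely supported functions `ℕ → ℕ`). -/
def IsLabel (M : Set (ℕ →₀ ℕ)) : Prop :=
  ∀ m₁ m : ℕ →₀ ℕ, m₁ ≤ m → m ∈ M → m₁ ∈ M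

/-- `𝓜 − r = {w : w + r ∈ 𝓜}`. -/
def Msub (M : Set (ℕ →₀ ℕ)) (r : ℕ →₀ ℕ) : Set (ℕ →₀ ℕ) := {w | w + r ∈ M}

/-- Specification of the partition data: each `D ℓ` is infinite, the `D ℓ` are pairwise
disjoint, and `lab n` is the index of the cell containing `n` (so the `D ℓ` cover `ℕ`). -/
def PartitionSpec (D : ℕ → Set ℕ) (lab : ℕ → ℕ) : Prop :=
  (∀ ℓ : ℕ, (D ℓ).Infinite) ∧ (∀ ℓ₁ ℓ₂ : ℕ, ℓ₁ ≠ ℓ₂ → D ℓ₁ ∩ D ℓ₂ = ∅) ∧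
  (∀ n : ℕ, n ∈ D (lab n))

/-- Specification that `R t` is the length vector `𝐫(t)` of the (unique) expansion of each
expanding time `t`. -/
def LengthVecSpec (k : ℤ → ℤ) (lab : ℕ → ℕ) (R : ℤ → ℕ →₀ ℕ) : Prop :=
  ∀ (t : ℤ) (r : ℕ) (j : Fin r → ℤ), IsExpansion k t r j →
    R t = ∑ i : Fin r, Finsupp.single (lab (j i).natAbs) 1

/-- `A[𝓜] = {t ∈ IP(k) : 𝐫(t) ∈ 𝓜}`. -/
def setA (k : ℤ → ℤ) (R : ℤ → ℕ →₀ ℕ) (M : Set (ℕ →₀ ℕ)) : Set ℤ :=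
  {t | t ∈ IPk k ∧ R t ∈ M}

/-- `A₊[𝓜] = A[𝓜] ∩ IP₊(k)`. -/
def setAP (k : ℤ → ℤ) (R : ℤ → ℕ →₀ ℕ) (M : Set (ℕ →₀ ℕ)) : Set ℤ :=
  setA k R M ∩ IPkP k

/-- The indicator point `χ(A) ∈ {0,1}^ℤ` of a set `A ⊆ ℤ`. -/
noncomputable def chiB (A : Set ℤ) : ℤ → Bool :=
  fun t => @decide (t ∈ A) (Classical.propDecidable _)

/-- `x[𝓜] = χ(A[𝓜])`. -/
noncomputable def xL (k : ℤ → ℤ) (R : ℤ → ℕ →₀ ℕ) (M : Set (ℕ →₀ ℕ)) : ℤ → Bool :=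
  chiB (setA k R M)

/-- `x₊[𝓜] = χ(A₊[𝓜])`. -/
noncomputable def xLP (k : ℤ → ℤ) (R : ℤ → ℕ →₀ ℕ) (M : Set (ℕ →₀ ℕ)) : ℤ → Bool :=
  chiB (setAP k R M)

/-- The iterated shift `Sⁿ` on `{0,1}^ℤ`: `(Sⁿx)_s = x_{s+n}`. -/
def shiftZ (n : ℤ) (x : ℤ → Bool) : ℤ → Bool := fun s => x (s + n)

/-- The standard metric on `{0,1}^ℤ`: `d(x,y) = inf {2^{-N} : x_t = y_t for all |t| < N}`. -/
noncomputable def bdist (x y : ℤ → Bool) : ℝ :=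
  sInf {r : ℝ | ∃ N : ℕ, (∀ t : ℤ, |t| < (N : ℤ) → x t = y t) ∧ r = (2 : ℝ) ^ (-(N : ℤ))}

/-- The indicator function of a set of ℕ-vectors, valued in the (discrete) two-point space. -/
noncomputable def labelInd (M : Set (ℕ →₀ ℕ)) : (ℕ →₀ ℕ) → Bool :=
  fun m => @decide (m ∈ M) (Classical.propDecidable _)

/-- The topology of the space of labels: the subspace topology induced from the product
topology on the power set of the set of ℕ-vectors (equivalently, the topology of the
ultrametric `d(𝓜₁,𝓜₂) = inf {2^{−N} : 𝓜₁ ∩ 𝓑_N = 𝓜₂ ∩ 𝓑_N}`). -/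
noncomputable def labTop : TopologicalSpace (Set (ℕ →₀ ℕ)) :=
  TopologicalSpace.induced labelInd inferInstance

/-- The space `𝓛𝓐𝓑` of labels. -/
def Lab : Type := {M : Set (ℕ →₀ ℕ) // IsLabel M}

/-- The topology of `𝓛𝓐𝓑`. -/
noncomputable def labTopL : TopologicalSpace Lab :=
  TopologicalSpace.induced (Subtype.val : Lab → Set (ℕ →₀ ℕ)) labTop

/-- Auxiliary: partial sums of `k` over naturals are nonnegative. -/
lemma stmt15_sum_nn (b : ℕ) (hb : 3 ≤ b) (k : ℤ → ℤ) (hk : IsExpanding b k) :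
    ∀ n : ℕ, 0 ≤ ∑ i ∈ Finset.range n, k (i : ℤ) := by
  have h0 : k 0 = 0 := by have := hk.1 0; simp at this; linarith
  intro n
  induction n with
  | zero => simp
  | succ n ih =>
    rw [Finset.sum_range_succ]
    have hkn : 0 ≤ k (n : ℤ) := by
      match n with
      | 0 => simp [h0]
      | (m+1) =>
        have := hk.2 m
        have hb' : (0:ℤ) ≤ b := by positivity
        push_cast at *
        nlinarith [ih]
    linarith

/-- Auxiliary: `k` is strictly monotone on the naturals. -/
lemma stmt15_kmono (b : ℕ) (hb : 3 ≤ b) (k : ℤ → ℤ) (hk : IsExpanding b k) :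
    StrictMono (fun n : ℕ => k (n : ℤ)) := by
  have h0 : k 0 = 0 := by have := hk.1 0; simp at this; linarith
  apply strictMono_nat_of_lt_succ
  intro n
  have hs := stmt15_sum_nn b hb k hk n
  have h2 := hk.2 n
  have hrs : ∑ i ∈ Finset.range (n+1), k (i:ℤ) = (∑ i ∈ Finset.range n, k (i:ℤ)) + k (n:ℤ) :=
    Finset.sum_range_succ _ _
  have hb' : (3:ℤ) ≤ b := by exact_mod_cast hb
  have hkn : 0 ≤ k (n : ℤ) := by
    match n with
    | 0 => simp [h0]
    | (m+1) =>
      have := hk.2 m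
      have := stmt15_sum_nn b hb k hk (m+1)
      push_cast at *
      nlinarith
  push_cast at *
  nlinarith

/-- Auxiliary: reindexing a sum over a finset of naturals by the reversed order
isomorphism from `Fin`. -/
lemma stmt15_sum_enum {M : Type*} [AddCommMonoid M] (J : Finset ℕ) (f : ℕ → M) :
    ∑ i : Fin J.card, f ((J.orderIsoOfFin rfl (Fin.rev i) : ℕ)) = ∑ n ∈ J, f n := by
  rw [← Finset.sum_coe_sort J f]
  rw [← Equiv.sum_comp (J.orderIsoOfFin rfl).toEquiv (fun x : {x // x ∈ J} => f x)]
  exact Fintype.sum_equiv Fin.revPerm _ _ (fun x => rfl)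

/-- Auxiliary: for every ℕ-vector `m` there is a time `t ∈ IP₊(k)` with `𝐫(t) = m`. -/
lemma stmt15_exists_time (b : ℕ) (hb : 3 ≤ b) (k : ℤ → ℤ) (hk : IsExpanding b k)
    (D : ℕ → Set ℕ) (lab : ℕ → ℕ) (hD : PartitionSpec D lab)
    (R : ℤ → ℕ →₀ ℕ) (hR : LengthVecSpec k lab R) (m : ℕ →₀ ℕ) :
    ∃ t : ℤ, t ∈ IPkP k ∧ t ∈ IPk k ∧ R t = m := by
  classical
  have hmono := stmt15_kmono b hb k hk
  have hex : ∀ ℓ : ℕ, ∃ Fℓ : Finset ℕ, ↑Fℓ ⊆ D ℓ \ {0} ∧ Fℓ.card = m ℓ := fun ℓ =>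
    ((hD.1 ℓ).diff (Set.finite_singleton 0)).exists_subset_card_eq (m ℓ)
  choose F hF1 hF2 using hex
  set J : Finset ℕ := m.support.biUnion F with hJ
  have hJmem : ∀ n ∈ J, ∃ ℓ ∈ m.support, n ∈ F ℓ := by
    intro n hn; simpa [hJ] using Finset.mem_biUnion.mp hn
  have hFD : ∀ ℓ, ∀ n ∈ F ℓ, n ∈ D ℓ ∧ n ≠ 0 := by
    intro ℓ n hn
    have := hF1 ℓ hn
    exact ⟨this.1, by simpa using this.2⟩
  have hlabF : ∀ ℓ, ∀ n ∈ F ℓ, lab n = ℓ := by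
    intro ℓ n hn
    by_contra hne
    have hdisj := hD.2.1 (lab n) ℓ hne
    have : n ∈ D (lab n) ∩ D ℓ := ⟨hD.2.2 n, (hFD ℓ n hn).1⟩
    rw [hdisj] at this; exact this
  have hJ0 : ∀ n ∈ J, n ≠ 0 := by
    intro n hn
    obtain ⟨ℓ, _, hnF⟩ := hJmem n hn
    exact (hFD ℓ n hnF).2
  set r := J.card
  set e : Fin r ≃o {x // x ∈ J} := J.orderIsoOfFin rfl with he
  set j : Fin r → ℤ := fun i => ((e (Fin.rev i) : ℕ) : ℤ) with hj
  set t : ℤ := ∑ i : Fin r, k (j i) with ht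
  have hjpos : ∀ i : Fin r, 0 < j i := by
    intro i
    have := hJ0 _ (e (Fin.rev i)).2
    simp only [hj]
    exact_mod_cast Nat.pos_of_ne_zero this
  have hexp : IsExpansion k t r j := by
    refine ⟨fun i => (hjpos i).ne', ?_, rfl⟩
    intro i₁ i₂ h12
    rw [abs_of_pos (hjpos i₁), abs_of_pos (hjpos i₂)]
    have h1 : Fin.rev i₂ < Fin.rev i₁ := by
      simpa using Fin.rev_lt_rev.mpr h12
    have h2 : ((e (Fin.rev i₂) : ℕ)) < ((e (Fin.rev i₁) : ℕ)) :=
      Subtype.coe_lt_coe.mpr (e.lt_iff_lt.mpr h1)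
    simp only [hj]
    exact_mod_cast h2
  have hnatAbs : ∀ i : Fin r, (j i).natAbs = ((e (Fin.rev i) : ℕ)) := fun i => by
    simp [hj]
  have hRt : R t = m := by
    rw [hR t r j hexp]
    have : (∑ i : Fin r, Finsupp.single (lab (j i).natAbs) (1:ℕ)) =
        ∑ i : Fin r, Finsupp.single (lab ((e (Fin.rev i) : ℕ))) 1 := by
      refine Finset.sum_congr rfl fun i _ => by rw [hnatAbs]
    rw [this, stmt15_sum_enum J (fun n => Finsupp.single (lab n) 1)]
    have hdisjF : (↑m.support : Set ℕ).PairwiseDisjoint F := by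
      intro ℓ₁ h1 ℓ₂ h2 hne
      refine Finset.disjoint_left.mpr fun n hn1 hn2 => ?_
      have hd := hD.2.1 ℓ₁ ℓ₂ hne
      have : n ∈ D ℓ₁ ∩ D ℓ₂ := ⟨(hFD ℓ₁ n hn1).1, (hFD ℓ₂ n hn2).1⟩
      rw [hd] at this; exact this
    rw [hJ, Finset.sum_biUnion hdisjF]
    have : ∀ ℓ ∈ m.support, (∑ n ∈ F ℓ, Finsupp.single (lab n) (1:ℕ)) = Finsupp.single ℓ (m ℓ) := by
      intro ℓ hℓ
      have : (∑ n ∈ F ℓ, Finsupp.single (lab n) (1:ℕ)) = ∑ n ∈ F ℓ, Finsupp.single ℓ 1 :=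
        Finset.sum_congr rfl fun n hn => by rw [hlabF ℓ n hn]
      rw [this, Finset.sum_const, hF2]
      simp [Finsupp.smul_single]
    rw [Finset.sum_congr rfl this]
    conv_rhs => rw [← Finsupp.sum_single m]
    rfl
  have hkinj : ∀ x ∈ J, ∀ y ∈ J, k (x:ℤ) = k (y:ℤ) → x = y := by
    intro x _ y _ hxy
    exact hmono.injective hxy
  have hsumJ : t = ∑ n ∈ J, k (n : ℤ) := by
    rw [ht, ← stmt15_sum_enum J (fun n => k (n:ℤ))]
  refine ⟨t, ?_, ?_, hRt⟩
  · refine ⟨J.image (fun n : ℕ => k (n:ℤ)), ?_, ?_⟩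
    · intro x hx
      simp only [Finset.coe_image, Set.mem_image] at hx
      obtain ⟨n, hn, rfl⟩ := hx
      exact ⟨(n:ℤ), by simp only [Set.mem_setOf_eq]; exact_mod_cast Nat.pos_of_ne_zero (hJ0 n hn), rfl⟩
    · rw [Finset.sum_image hkinj, hsumJ]
  · refine ⟨J.image (fun n : ℕ => k (n:ℤ)), ?_, ?_⟩
    · intro x hx
      simp only [Finset.coe_image, Set.mem_image] at hx
      obtain ⟨n, _, rfl⟩ := hx
      exact ⟨(n:ℤ), rfl⟩
    · rw [Finset.sum_image hkinj, hsumJ]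

/-- With the standing labeled-subshift setup, the maps `𝓜 ↦ x[𝓜]` and `𝓜 ↦ x₊[𝓜]` from
the space of labels into `{0,1}^ℤ` are injective and continuous, hence homeomorphisms onto
their images (topological embeddings). -/

theorem stmt15 (b : ℕ) (hb : 3 ≤ b) (k : ℤ → ℤ) (hk : IsExpanding b k)
    (hk1 : (b : ℤ) + 1 < k 1)
    (D : ℕ → Set ℕ) (lab : ℕ → ℕ) (hD : PartitionSpec D lab)
    (R : ℤ → ℕ →₀ ℕ) (hR : LengthVecSpec k lab R) :
    Function.Injective (fun p : Lab => xL k R p.1) ∧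
    Function.Injective (fun p : Lab => xLP k R p.1) ∧
    @Continuous Lab (ℤ → Bool) labTopL _ (fun p : Lab => xL k R p.1) ∧
    @Continuous Lab (ℤ → Bool) labTopL _ (fun p : Lab => xLP k R p.1) ∧
    @Topology.IsEmbedding Lab (ℤ → Bool) labTopL _ (fun p : Lab => xL k R p.1) ∧
    @Topology.IsEmbedding Lab (ℤ → Bool) labTopL _ (fun p : Lab => xLP k R p.1) := by
  classical
  letI : TopologicalSpace Lab := labTopL
  obtain ⟨T, hT⟩ : ∃ T : (ℕ →₀ ℕ) → ℤ, ∀ m, T m ∈ IPkP k ∧ T m ∈ IPk k ∧ R (T m) = m := by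
    choose T h1 h2 h3 using fun m => stmt15_exists_time b hb k hk D lab hD R hR m
    exact ⟨T, fun m => ⟨h1 m, h2 m, h3 m⟩⟩
  have hiffA : ∀ (M : Set (ℕ →₀ ℕ)) (m : ℕ →₀ ℕ), (T m ∈ setA k R M ↔ m ∈ M) := by
    intro M m
    simp [setA, (hT m).2.1, (hT m).2.2]
  have hiffAP : ∀ (M : Set (ℕ →₀ ℕ)) (m : ℕ →₀ ℕ), (T m ∈ setAP k R M ↔ m ∈ M) := by
    intro M m
    constructor
    · exact fun h => (hiffA M m).mp h.1
    · exact fun h => ⟨(hiffA M m).mpr h, (hT m).1⟩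
  have hfac : ∀ (p : Lab) (m : ℕ →₀ ℕ), labelInd p.1 m = xL k R p.1 (T m) := fun p m =>
    (decide_eq_decide.mpr (hiffA p.1 m)).symm
  have hfacP : ∀ (p : Lab) (m : ℕ →₀ ℕ), labelInd p.1 m = xLP k R p.1 (T m) := fun p m =>
    (decide_eq_decide.mpr (hiffAP p.1 m)).symm
  -- injectivity
  have hinjA : Function.Injective (fun p : Lab => xL k R p.1) := by
    intro p q h
    apply Subtype.ext
    ext m
    have h1 : labelInd p.1 m = labelInd q.1 m := by
      rw [hfac p m, hfac q m]
      exact congrFun h (T m)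
    simp only [labelInd] at h1
    exact decide_eq_decide.mp h1
  have hinjP : Function.Injective (fun p : Lab => xLP k R p.1) := by
    intro p q h
    apply Subtype.ext
    ext m
    have h1 : labelInd p.1 m = labelInd q.1 m := by
      rw [hfacP p m, hfacP q m]
      exact congrFun h (T m)
    simp only [labelInd] at h1
    exact decide_eq_decide.mp h1
  -- the topology of Lab as induced by `labelInd ∘ val`
  have hcomp : labTopL = TopologicalSpace.induced (fun p : Lab => labelInd p.1)
      (inferInstance : TopologicalSpace ((ℕ →₀ ℕ) → Bool)) := by
    rw [labTopL, labTop]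
    exact induced_compose
  -- generic inducing lemma
  have lemInd : ∀ (f : Lab → (ℤ → Bool)) (h : ((ℕ →₀ ℕ) → Bool) → (ℤ → Bool))
      (g : (ℤ → Bool) → ((ℕ →₀ ℕ) → Bool)),
      Continuous h → Continuous g → f = h ∘ (fun p : Lab => labelInd p.1) →
      (fun p : Lab => labelInd p.1) = g ∘ f →
      labTopL = TopologicalSpace.induced f (inferInstance : TopologicalSpace (ℤ → Bool)) := by
    intro f h g hh hg hf hgf
    refine le_antisymm ?_ ?_
    · rw [hcomp, hf, ← induced_compose]
      exact induced_mono (continuous_iff_le_induced.mp hh)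
    · rw [hcomp, hgf, ← induced_compose]
      exact induced_mono (continuous_iff_le_induced.mp hg)
  set g : (ℤ → Bool) → ((ℕ →₀ ℕ) → Bool) := fun x m => x (T m) with hgdef
  have hgcont : Continuous g := continuous_pi fun m => continuous_apply (T m)
  -- the map for xL
  set hA : ((ℕ →₀ ℕ) → Bool) → (ℤ → Bool) :=
    fun x t => if t ∈ IPk k then x (R t) else false with hAdef
  have hAcont : Continuous hA := by
    refine continuous_pi fun t => ?_
    by_cases ht : t ∈ IPk k
    · have h1 : (fun x : ((ℕ →₀ ℕ) → Bool) => hA x t) = fun x => x (R t) :=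
        funext fun x => by simp only [hAdef]; exact if_pos ht
      rw [h1]; exact continuous_apply (R t)
    · have h1 : (fun x : ((ℕ →₀ ℕ) → Bool) => hA x t) = fun _ => false :=
        funext fun x => by simp only [hAdef]; exact if_neg ht
      rw [h1]; exact continuous_const
  have hfA : (fun p : Lab => xL k R p.1) = hA ∘ (fun p : Lab => labelInd p.1) := by
    funext p t
    simp only [Function.comp_apply, hAdef, xL, chiB, labelInd]
    by_cases ht : t ∈ IPk k
    · simp only [ht, if_true]
      exact decide_eq_decide.mpr ⟨fun hc => hc.2, fun hc => ⟨ht, hc⟩⟩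
    · simp only [ht, if_false]
      exact decide_eq_false fun hc => ht hc.1
  have hgfA : (fun p : Lab => labelInd p.1) = g ∘ (fun p : Lab => xL k R p.1) := by
    funext p m
    exact hfac p m
  have hindA := lemInd _ hA g hAcont hgcont hfA hgfA
  -- the map for xLP
  set hP : ((ℕ →₀ ℕ) → Bool) → (ℤ → Bool) :=
    fun x t => if t ∈ IPk k ∧ t ∈ IPkP k then x (R t) else false with hPdef
  have hPcont : Continuous hP := by
    refine continuous_pi fun t => ?_
    by_cases ht : t ∈ IPk k ∧ t ∈ IPkP k
    · have h1 : (fun x : ((ℕ →₀ ℕ) → Bool) => hP x t) = fun x => x (R t) :=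
        funext fun x => by simp only [hPdef]; exact if_pos ht
      rw [h1]; exact continuous_apply (R t)
    · have h1 : (fun x : ((ℕ →₀ ℕ) → Bool) => hP x t) = fun _ => false :=
        funext fun x => by simp only [hPdef]; exact if_neg ht
      rw [h1]; exact continuous_const
  have hfP : (fun p : Lab => xLP k R p.1) = hP ∘ (fun p : Lab => labelInd p.1) := by
    funext p t
    simp only [Function.comp_apply, hPdef, xLP, chiB, labelInd]
    by_cases ht : t ∈ IPk k ∧ t ∈ IPkP k
    · simp only [ht, if_true]
      exact decide_eq_decide.mpr
        ⟨fun hc => hc.1.2, fun hc => ⟨⟨ht.1, hc⟩, ht.2⟩⟩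
    · simp only [ht, if_false]
      exact decide_eq_false fun hc => ht ⟨hc.1.1, hc.2⟩
  have hgfP : (fun p : Lab => labelInd p.1) = g ∘ (fun p : Lab => xLP k R p.1) := by
    funext p m
    exact hfacP p m
  have hindP := lemInd _ hP g hPcont hgcont hfP hgfP
  refine ⟨hinjA, hinjP, ?_, ?_, ?_, ?_⟩
  · exact continuous_iff_le_induced.mpr (le_of_eq hindA)
  · exact continuous_iff_le_induced.mpr (le_of_eq hindP)
  · exact ⟨⟨hindA⟩, hinjA⟩
  · exact ⟨⟨hindP⟩, hinjP⟩
end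

section
/- With the standing labeled-subshift setup, for a label 𝓜 the following are equivalent: (i) 𝓜 is a recurrent label; (ii) x[𝓜] is a recurrent point for the shift S on {0,1}^ℤ; (iii) x₊[𝓜] is a recurrent point for the shift S on {0,1}^ℤ. -/
open Filter Topology

/-- A label `𝓜` is recurrent if it lies in the closure of `{𝓜 − r : r > 0}` in the space of
labels. -/
def RecurrentLabel (M : Set (ℕ →₀ ℕ)) : Prop :=
  M ∈ @closure _ labTop {M' : Set (ℕ →₀ ℕ) | ∃ r : ℕ →₀ ℕ, 0 < r ∧ M' = Msub M r}

/-- `x` is a recurrent point for the shift: a cluster point of `(Sⁿ x)` as `n → +∞` or as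
`n → −∞`. -/
def RecPt (x : ℤ → Bool) : Prop :=
  MapClusterPt x (atTop : Filter ℤ) (fun n : ℤ => shiftZ n x) ∨
  MapClusterPt x (atBot : Filter ℤ) (fun n : ℤ => shiftZ n x)


section kfacts
variable {b : ℕ} {k : ℤ → ℤ}

lemma k_zero (hk : IsExpanding b k) : k 0 = 0 := by
  have := hk.1 0; simp at this; omega

lemma k_nonneg (hb : 3 ≤ b) (hk : IsExpanding b k) : ∀ p : ℕ, 0 ≤ k p := by
  intro p
  induction p using Nat.strong_induction_on with
  | _ p ih =>
    match p with
    | 0 => simp [k_zero hk]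
    | (n+1) =>
      have h := hk.2 n
      have hsum : 0 ≤ ∑ i ∈ Finset.range (n + 1), k (i : ℤ) :=
        Finset.sum_nonneg (fun i hi => ih i (Finset.mem_range.mp hi))
      have : (0:ℤ) ≤ (b:ℤ) * ∑ i ∈ Finset.range (n + 1), k (i : ℤ) :=
        mul_nonneg (by positivity) hsum
      push_cast
      omega

lemma k_sum_lt (hb : 3 ≤ b) (hk : IsExpanding b k) (p : ℕ) (hp : 1 ≤ p) :
    3 * ∑ i ∈ Finset.range p, k (i : ℤ) < k p := by
  obtain ⟨n, rfl⟩ : ∃ n, p = n + 1 := ⟨p - 1, by omega⟩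
  have h := hk.2 n
  have hsum : 0 ≤ ∑ i ∈ Finset.range (n + 1), k (i : ℤ) :=
    Finset.sum_nonneg (fun i hi => k_nonneg hb hk i)
  have h3 : (3:ℤ) * ∑ i ∈ Finset.range (n + 1), k (i : ℤ) ≤
      (b:ℤ) * ∑ i ∈ Finset.range (n + 1), k (i : ℤ) := by
    apply mul_le_mul_of_nonneg_right _ hsum
    exact_mod_cast hb
  push_cast at h ⊢
  omega

lemma k_pos (hb : 3 ≤ b) (hk : IsExpanding b k) (p : ℕ) (hp : 1 ≤ p) : 0 < k p := by
  have h := k_sum_lt hb hk p hp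
  have hsum : 0 ≤ ∑ i ∈ Finset.range p, k (i : ℤ) :=
    Finset.sum_nonneg (fun i hi => k_nonneg hb hk i)
  omega

lemma k_ge (hb : 3 ≤ b) (hk : IsExpanding b k) (hk1 : (b : ℤ) + 1 < k 1) :
    ∀ p : ℕ, 1 ≤ p → (p : ℤ) ≤ k p := by
  intro p
  induction p with
  | zero => omega
  | succ n ih =>
    intro _
    rcases Nat.eq_zero_or_pos n with rfl | hn
    · have : (3:ℤ) ≤ (b:ℤ) := by exact_mod_cast hb
      simpa using by omega
    · have h := k_sum_lt hb hk (n+1) (by omega)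
      have hmem : n ∈ Finset.range (n+1) := by simp
      have hsum : k (n:ℤ) ≤ ∑ i ∈ Finset.range (n + 1), k (i : ℤ) :=
        Finset.single_le_sum (fun i _ => k_nonneg hb hk i) hmem
      have hkn := ih hn
      push_cast at h ⊢
      omega

lemma k_threshold (hb : 3 ≤ b) (hk : IsExpanding b k) (hk1 : (b : ℤ) + 1 < k 1) (X : ℤ) :
    ∃ C : ℕ, 1 ≤ C ∧ ∀ p : ℕ, C < p → X < k p := by
  refine ⟨max 1 X.toNat, le_max_left _ _, fun p hp => ?_⟩
  have h1 : 1 ≤ p := by omega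
  have h2 : X.toNat < p := by omega
  have := k_ge hb hk hk1 p h1
  omega

lemma k_abs (hb : 3 ≤ b) (hk : IsExpanding b k) (a : ℤ) : |k a| = k (a.natAbs : ℤ) := by
  rcases le_or_gt 0 a with h | h
  · rw [abs_of_nonneg]
    · congr 1; omega
    · have : a = (a.natAbs : ℤ) := by omega
      rw [this]; exact k_nonneg hb hk a.natAbs
  · have ha : a = -(a.natAbs : ℤ) := by omega
    rw [ha, hk.1, abs_neg, abs_of_nonneg (k_nonneg hb hk a.natAbs)]
    congr 1; omega

lemma k_pos_of_pos (hb : 3 ≤ b) (hk : IsExpanding b k) (a : ℤ) (ha : 0 < a) : 0 < k a := by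
  have : a = (a.natAbs : ℤ) := by omega
  rw [this]; exact k_pos hb hk a.natAbs (by omega)

lemma k_strictMono (hb : 3 ≤ b) (hk : IsExpanding b k) : StrictMono k := by
  have hnat : ∀ n : ℕ, k (n:ℤ) < k ((n:ℤ)+1) := by
    intro n
    have h := k_sum_lt hb hk (n+1) (by omega)
    have hmem : n ∈ Finset.range (n+1) := by simp
    have hsum : k (n:ℤ) ≤ ∑ i ∈ Finset.range (n + 1), k (i : ℤ) :=
      Finset.single_le_sum (fun i _ => k_nonneg hb hk i) hmem
    have := k_nonneg hb hk n
    push_cast at h ⊢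
    omega
  have hmono : ∀ m n : ℕ, m < n → k (m:ℤ) < k (n:ℤ) := by
    intro m n hmn
    induction n with
    | zero => omega
    | succ n ih =>
      rcases Nat.lt_or_ge m n with h | h
      · have := ih h; have := hnat n; push_cast at *; omega
      · have : m = n := by omega
        subst this; have := hnat m; push_cast at *; omega
  intro a c hac
  rcases le_or_gt 0 a with ha | ha
  · have hc : 0 < c := by omega
    have : k (a.natAbs : ℤ) < k (c.natAbs : ℤ) := hmono _ _ (by omega)
    have ea : (a.natAbs : ℤ) = a := by omega
    have ec : (c.natAbs : ℤ) = c := by omega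
    rwa [ea, ec] at this
  · rcases le_or_gt 0 c with hc | hc
    · have hka : k a < 0 := by
        have ha' : a = -(a.natAbs : ℤ) := by omega
        have : 0 < k (a.natAbs:ℤ) := k_pos hb hk a.natAbs (by omega)
        rw [ha', hk.1]; omega
      have hkc : 0 ≤ k c := by
        have : c = (c.natAbs : ℤ) := by omega
        rw [this]; exact k_nonneg hb hk c.natAbs
      omega
    · have ha' : a = -(a.natAbs : ℤ) := by omega
      have hc' : c = -(c.natAbs : ℤ) := by omega
      have : k (c.natAbs : ℤ) < k (a.natAbs : ℤ) := hmono _ _ (by omega)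
      rw [ha', hc', hk.1, hk.1]; omega

lemma k_inj (hb : 3 ≤ b) (hk : IsExpanding b k) : Function.Injective k :=
  (k_strictMono hb hk).injective

lemma k_eq_zero_iff (hb : 3 ≤ b) (hk : IsExpanding b k) (a : ℤ) : k a = 0 ↔ a = 0 := by
  constructor
  · intro h
    have : k a = k 0 := by rw [k_zero hk, h]
    exact k_inj hb hk this
  · rintro rfl; exact k_zero hk

end kfacts


section digits
variable {b : ℕ} {k : ℤ → ℤ}

/-- A signed digit set: no zero, distinct absolute values. -/
def Digits (G : Finset ℤ) : Prop :=
  (0 : ℤ) ∉ G ∧ ∀ a ∈ G, ∀ c ∈ G, a.natAbs = c.natAbs → a = c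

noncomputable def sumk (k : ℤ → ℤ) (G : Finset ℤ) : ℤ := ∑ a ∈ G, k a

noncomputable def rvec (lab : ℕ → ℕ) (G : Finset ℤ) : ℕ →₀ ℕ :=
  ∑ a ∈ G, Finsupp.single (lab a.natAbs) 1

lemma Digits.subset {G H : Finset ℤ} (h : Digits G) (hHG : H ⊆ G) : Digits H :=
  ⟨fun h0 => h.1 (hHG h0), fun a ha c hc => h.2 a (hHG ha) c (hHG hc)⟩

lemma Digits.empty : Digits (∅ : Finset ℤ) := ⟨by simp, by simp⟩

end digits


section estimates
variable {b : ℕ} {k : ℤ → ℤ}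

/-- bound: if all digits have absolute value < p, the sum is at most the tail sum. -/
lemma sumk_bound (hb : 3 ≤ b) (hk : IsExpanding b k) {G : Finset ℤ} (hG : Digits G)
    {p : ℕ} (hp : ∀ a ∈ G, a.natAbs < p) :
    |sumk k G| ≤ ∑ i ∈ Finset.range p, k (i : ℤ) := by
  calc |sumk k G| ≤ ∑ a ∈ G, |k a| := Finset.abs_sum_le_sum_abs _ _
    _ = ∑ a ∈ G, k ((a.natAbs : ℕ) : ℤ) := by
        exact Finset.sum_congr rfl (fun a _ => k_abs hb hk a)
    _ = ∑ i ∈ G.image Int.natAbs, k ((i : ℕ) : ℤ) := by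
        rw [Finset.sum_image]
        intro a ha c hc h
        exact hG.2 a ha c hc h
    _ ≤ ∑ i ∈ Finset.range p, k ((i : ℕ) : ℤ) := by
        apply Finset.sum_le_sum_of_subset_of_nonneg
        · intro i hi
          simp only [Finset.mem_image] at hi
          obtain ⟨a, ha, rfl⟩ := hi
          exact Finset.mem_range.mpr (hp a ha)
        · intro i _ _; exact k_nonneg hb hk i

/-- the signed coefficient of absolute value class of `a` in `G`. -/
noncomputable def coefd (G : Finset ℤ) (a : ℤ) : ℤ :=
  (if a ∈ G then 1 else 0) - (if -a ∈ G then 1 else 0)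

lemma sumk_split (hk : IsExpanding b k) {G : Finset ℤ} (hG : Digits G) {a : ℤ} (ha : a ≠ 0) :
    sumk k G = coefd G a * k a + sumk k (G \ {a, -a}) ∧
      Digits (G \ {a, -a}) ∧ ∀ c ∈ G \ {a, -a}, c.natAbs ≠ a.natAbs := by
  classical
  have hdig : Digits (G \ {a, -a}) := hG.subset (Finset.sdiff_subset)
  have hnot : ∀ c ∈ G \ {a, -a}, c.natAbs ≠ a.natAbs := by
    intro c hc hcabs
    rw [Finset.mem_sdiff] at hc
    rcases Int.natAbs_eq_natAbs_iff.mp hcabs with rfl | rfl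
    · exact hc.2 (by simp)
    · exact hc.2 (by simp)
  refine ⟨?_, hdig, hnot⟩
  have hne : a ≠ -a := by omega
  have hGsub : G ∩ {a, -a} = (if a ∈ G then ({a} : Finset ℤ) else ∅) ∪
      (if -a ∈ G then ({-a} : Finset ℤ) else ∅) := by
    ext x
    simp only [Finset.mem_inter, Finset.mem_insert, Finset.mem_singleton, Finset.mem_union]
    split <;> split <;> simp_all <;> aesop
  have key : ∑ x ∈ G ∩ {a, -a}, k x = coefd G a * k a := by
    rw [hGsub, Finset.sum_union]
    · unfold coefd
      have hka : k (-a) = - k a := hk.1 a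
      split <;> split <;> simp_all <;> ring
    · split <;> split <;> simp_all <;> omega
  have := Finset.sum_inter_add_sum_sdiff G {a, -a} k
  unfold sumk
  omega

lemma coefd_abs_le (G : Finset ℤ) (a : ℤ) : |coefd G a| ≤ 1 := by
  unfold coefd; split <;> split <;> simp

/-- Main inequality: if the top-coefficient combination is nonzero, the value is large. -/
lemma main_ineq (hb : 3 ≤ b) (hk : IsExpanding b k)
    {G₁ G₂ : Finset ℤ} (h₁ : Digits G₁) (h₂ : Digits G₂)
    {a : ℤ} (ha : a ≠ 0) (hmax : ∀ c ∈ G₁ ∪ G₂, c.natAbs ≤ a.natAbs)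
    (c₁ c₂ : ℤ)
    (hγ : c₁ * coefd G₁ a + c₂ * coefd G₂ a ≠ 0) :
    k (a.natAbs : ℤ) - (|c₁| + |c₂|) * ∑ i ∈ Finset.range a.natAbs, k (i : ℤ)
      ≤ |c₁ * sumk k G₁ + c₂ * sumk k G₂| := by
  classical
  obtain ⟨e₁, hd₁, hn₁⟩ := sumk_split hk h₁ ha
  obtain ⟨e₂, hd₂, hn₂⟩ := sumk_split hk h₂ ha
  set γ := c₁ * coefd G₁ a + c₂ * coefd G₂ a with hγdef
  have hexp : c₁ * sumk k G₁ + c₂ * sumk k G₂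
      = γ * k a + (c₁ * sumk k (G₁ \ {a, -a}) + c₂ * sumk k (G₂ \ {a, -a})) := by
    rw [e₁, e₂]; ring
  have hb₁ : |sumk k (G₁ \ {a, -a})| ≤ ∑ i ∈ Finset.range a.natAbs, k (i : ℤ) := by
    apply sumk_bound hb hk hd₁
    intro c hc
    have h1 := hmax c (Finset.mem_union_left _ (Finset.sdiff_subset hc))
    have h2 := hn₁ c hc
    omega
  have hb₂ : |sumk k (G₂ \ {a, -a})| ≤ ∑ i ∈ Finset.range a.natAbs, k (i : ℤ) := by
    apply sumk_bound hb hk hd₂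
    intro c hc
    have h1 := hmax c (Finset.mem_union_right _ (Finset.sdiff_subset hc))
    have h2 := hn₂ c hc
    omega
  have hγ1 : 1 ≤ |γ| := Int.one_le_abs hγ
  have hka : |k a| = k (a.natAbs : ℤ) := k_abs hb hk a
  have hkpos : 0 ≤ k a ∨ k a < 0 := le_or_gt 0 (k a)
  have habs1 : |γ * k a| = |γ| * k (a.natAbs:ℤ) := by rw [abs_mul, hka]
  have hklow : k (a.natAbs : ℤ) ≤ |γ * k a| := by
    rw [habs1]
    have : 0 ≤ k (a.natAbs:ℤ) := k_nonneg hb hk a.natAbs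
    nlinarith
  have hrest : |c₁ * sumk k (G₁ \ {a, -a}) + c₂ * sumk k (G₂ \ {a, -a})|
      ≤ (|c₁| + |c₂|) * ∑ i ∈ Finset.range a.natAbs, k (i : ℤ) := by
    calc |c₁ * sumk k (G₁ \ {a, -a}) + c₂ * sumk k (G₂ \ {a, -a})|
        ≤ |c₁ * sumk k (G₁ \ {a, -a})| + |c₂ * sumk k (G₂ \ {a, -a})| := abs_add_le _ _
      _ = |c₁| * |sumk k (G₁ \ {a, -a})| + |c₂| * |sumk k (G₂ \ {a, -a})| := by
          rw [abs_mul, abs_mul]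
      _ ≤ (|c₁| + |c₂|) * ∑ i ∈ Finset.range a.natAbs, k (i : ℤ) := by
          have hc1 : (0:ℤ) ≤ |c₁| := abs_nonneg _
          have hc2 : (0:ℤ) ≤ |c₂| := abs_nonneg _
          have g1 : |c₁| * |sumk k (G₁ \ {a, -a})| ≤ |c₁| * ∑ i ∈ Finset.range a.natAbs, k (i:ℤ) :=
            mul_le_mul_of_nonneg_left hb₁ hc1
          have g2 : |c₂| * |sumk k (G₂ \ {a, -a})| ≤ |c₂| * ∑ i ∈ Finset.range a.natAbs, k (i:ℤ) :=
            mul_le_mul_of_nonneg_left hb₂ hc2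
          nlinarith
  calc k (a.natAbs : ℤ) - (|c₁| + |c₂|) * ∑ i ∈ Finset.range a.natAbs, k (i : ℤ)
      ≤ |γ * k a| - |c₁ * sumk k (G₁ \ {a, -a}) + c₂ * sumk k (G₂ \ {a, -a})| := by omega
    _ ≤ |c₁ * sumk k G₁ + c₂ * sumk k G₂| := by
        rw [hexp]
        have := abs_add_le (γ * k a + (c₁ * sumk k (G₁ \ {a, -a}) + c₂ * sumk k (G₂ \ {a, -a})))
          (-(c₁ * sumk k (G₁ \ {a, -a}) + c₂ * sumk k (G₂ \ {a, -a})))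
        simp only [add_neg_cancel_right, abs_neg] at this
        omega

end estimates


section keylemmas
variable {b : ℕ} {k : ℤ → ℤ}

lemma exists_max_natAbs {S : Finset ℤ} (hS : S.Nonempty) :
    ∃ a ∈ S, ∀ c ∈ S, c.natAbs ≤ a.natAbs := by
  classical
  obtain ⟨a, ha, hmax⟩ := S.exists_max_image Int.natAbs hS
  exact ⟨a, ha, hmax⟩

lemma mem_digits_ne_zero {G : Finset ℤ} (hG : Digits G) {a : ℤ} (ha : a ∈ G) : a ≠ 0 := by
  rintro rfl; exact hG.1 ha

lemma neg_not_mem {G : Finset ℤ} (hG : Digits G) {a : ℤ} (ha : a ∈ G) : -a ∉ G := by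
  intro hna
  have := hG.2 a ha (-a) hna (by simp)
  have := mem_digits_ne_zero hG ha
  omega

lemma key_lemma (hb : 3 ≤ b) (hk : IsExpanding b k)
    {G₁ G₂ : Finset ℤ} (h₁ : Digits G₁) (h₂ : Digits G₂) (hne : G₁ ≠ G₂) :
    ∃ a ∈ (G₁ \ G₂) ∪ (G₂ \ G₁),
      (∀ c ∈ (G₁ \ G₂) ∪ (G₂ \ G₁), c.natAbs ≤ a.natAbs) ∧
      k (a.natAbs : ℤ) < 3 * |sumk k G₁ - sumk k G₂| := by
  classical
  set D₁ := G₁ \ G₂ with hD₁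
  set D₂ := G₂ \ G₁ with hD₂
  have hSne : (D₁ ∪ D₂).Nonempty := by
    rw [Finset.nonempty_iff_ne_empty]
    intro h
    rw [Finset.union_eq_empty] at h
    exact hne (Finset.Subset.antisymm
      (Finset.sdiff_eq_empty_iff_subset.mp h.1) (Finset.sdiff_eq_empty_iff_subset.mp h.2))
  obtain ⟨a, ha, hmax⟩ := exists_max_natAbs hSne
  refine ⟨a, ha, hmax, ?_⟩
  have hd₁ : Digits D₁ := h₁.subset Finset.sdiff_subset
  have hd₂ : Digits D₂ := h₂.subset Finset.sdiff_subset
  have ha0 : a ≠ 0 := by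
    rcases Finset.mem_union.mp ha with h | h
    · exact mem_digits_ne_zero hd₁ h
    · exact mem_digits_ne_zero hd₂ h
  -- difference identity
  have hdiff : sumk k G₁ - sumk k G₂ = sumk k D₁ - sumk k D₂ := by
    have e₁ : ∑ x ∈ G₁ ∩ G₂, k x + ∑ x ∈ D₁, k x = ∑ x ∈ G₁, k x :=
      Finset.sum_inter_add_sum_sdiff G₁ G₂ k
    have e₂ : ∑ x ∈ G₁ ∩ G₂, k x + ∑ x ∈ D₂, k x = ∑ x ∈ G₂, k x := by
      rw [Finset.inter_comm]
      exact Finset.sum_inter_add_sum_sdiff G₂ G₁ k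
    unfold sumk
    omega
  -- the top coefficient is nonzero
  have hγ : (1:ℤ) * coefd D₁ a + (-1) * coefd D₂ a ≠ 0 := by
    have hdisj : ∀ x, x ∈ D₁ → x ∉ D₂ := by
      intro x hx hx2
      rw [hD₁, Finset.mem_sdiff] at hx
      rw [hD₂, Finset.mem_sdiff] at hx2
      exact hx.2 hx2.1
    rcases Finset.mem_union.mp ha with h | h
    · have h1 : coefd D₁ a = 1 := by
        unfold coefd
        rw [if_pos h, if_neg (neg_not_mem hd₁ h)]; norm_num
      have h2 : coefd D₂ a = (if -a ∈ D₂ then (1:ℤ) else 0) * (-1) := by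
        unfold coefd
        rw [if_neg (hdisj a h)]
        split <;> ring
      rw [h1, h2]
      split <;> omega
    · have h1 : coefd D₂ a = 1 := by
        unfold coefd
        rw [if_pos h, if_neg (neg_not_mem hd₂ h)]; norm_num
      have h2 : coefd D₁ a = (if -a ∈ D₁ then (1:ℤ) else 0) * (-1) := by
        unfold coefd
        rw [if_neg (fun hx => hdisj a hx h)]
        split <;> ring
      rw [h1, h2]
      split <;> omega
  have hmax' : ∀ c ∈ D₁ ∪ D₂, c.natAbs ≤ a.natAbs := hmax
  have hineq := main_ineq hb hk hd₁ hd₂ ha0 hmax' 1 (-1) hγ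
  have hsum := k_sum_lt hb hk a.natAbs (by omega)
  have habs : |(1:ℤ) * sumk k D₁ + (-1) * sumk k D₂| = |sumk k G₁ - sumk k G₂| := by
    rw [hdiff]; congr 1; ring
  rw [habs] at hineq
  simp only [abs_one, abs_neg] at hineq
  omega

/-- Uniqueness of digit expansions. -/
lemma sumk_injective (hb : 3 ≤ b) (hk : IsExpanding b k)
    {G₁ G₂ : Finset ℤ} (h₁ : Digits G₁) (h₂ : Digits G₂)
    (h : sumk k G₁ = sumk k G₂) : G₁ = G₂ := by
  by_contra hne
  obtain ⟨a, ha, -, hlt⟩ := key_lemma hb hk h₁ h₂ hne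
  have ha0 : a ≠ 0 := by
    rcases Finset.mem_union.mp ha with h' | h'
    · exact mem_digits_ne_zero (h₁.subset Finset.sdiff_subset) h'
    · exact mem_digits_ne_zero (h₂.subset Finset.sdiff_subset) h'
  have := k_pos hb hk a.natAbs (by omega)
  rw [h, sub_self, abs_zero, mul_zero] at hlt
  omega

/-- Separation: if two digit sets have close sums, they agree above a threshold. -/
lemma sep_lemma (hb : 3 ≤ b) (hk : IsExpanding b k)
    {G₁ G₂ : Finset ℤ} (h₁ : Digits G₁) (h₂ : Digits G₂)
    {C : ℕ} {N : ℤ} (hC : ∀ p : ℕ, C < p → 3 * N < k (p:ℤ))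
    (hclose : |sumk k G₁ - sumk k G₂| ≤ N) :
    ∀ a : ℤ, C < a.natAbs → (a ∈ G₁ ↔ a ∈ G₂) := by
  classical
  intro a haC
  by_contra hiff
  have hne : G₁ ≠ G₂ := by rintro rfl; exact hiff Iff.rfl
  obtain ⟨w, hw, hwmax, hwlt⟩ := key_lemma hb hk h₁ h₂ hne
  have haS : a ∈ (G₁ \ G₂) ∪ (G₂ \ G₁) := by
    simp only [Finset.mem_union, Finset.mem_sdiff]
    by_cases h1 : a ∈ G₁
    · left; exact ⟨h1, fun h2 => hiff ⟨fun _ => h2, fun _ => h1⟩⟩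
    · right
      refine ⟨?_, h1⟩
      by_contra h2
      exact hiff ⟨fun h => absurd h h1, fun h => absurd h h2⟩
  have hwC : C < w.natAbs := lt_of_lt_of_le haC (hwmax a haS)
  have := hC w.natAbs hwC
  omega

/-- No digit sum doubles to another digit sum (unless empty). -/
lemma two_lemma (hb : 3 ≤ b) (hk : IsExpanding b k)
    {G G' : Finset ℤ} (hG : Digits G) (hG' : Digits G')
    (h : 2 * sumk k G = sumk k G') : G = ∅ := by
  classical
  by_contra hne
  have hSne : (G ∪ G').Nonempty := by
    obtain ⟨a, ha⟩ := Finset.nonempty_iff_ne_empty.mpr hne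
    exact ⟨a, Finset.mem_union_left _ ha⟩
  obtain ⟨a, ha, hmax⟩ := exists_max_natAbs hSne
  have ha0 : a ≠ 0 := by
    rcases Finset.mem_union.mp ha with h' | h'
    · exact mem_digits_ne_zero hG h'
    · exact mem_digits_ne_zero hG' h'
  have hγ : (2:ℤ) * coefd G a + (-1) * coefd G' a ≠ 0 := by
    have c1 := abs_le.mp (coefd_abs_le G a)
    have c2 := abs_le.mp (coefd_abs_le G' a)
    have hone : coefd G a ≠ 0 ∨ coefd G' a ≠ 0 := by
      rcases Finset.mem_union.mp ha with h' | h'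
      · left
        unfold coefd
        rw [if_pos h', if_neg (neg_not_mem hG h')]
        norm_num
      · right
        unfold coefd
        rw [if_pos h', if_neg (neg_not_mem hG' h')]
        norm_num
    omega
  have hineq := main_ineq hb hk hG hG' ha0 hmax 2 (-1) hγ
  have hsum := k_sum_lt hb hk a.natAbs (by omega)
  have : (2:ℤ) * sumk k G + (-1) * sumk k G' = 0 := by omega
  rw [this, abs_zero] at hineq
  have habs23 : |(2:ℤ)| + |(-1:ℤ)| = 3 := by norm_num
  rw [habs23] at hineq
  omega

end keylemmas


section ipk
variable {b : ℕ} {k : ℤ → ℤ}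

lemma digits_mem_IPk (hb : 3 ≤ b) (hk : IsExpanding b k) {G : Finset ℤ} (hG : Digits G) :
    sumk k G ∈ IPk k := by
  classical
  refine ⟨G.image k, ?_, ?_⟩
  · intro v hv
    simp only [Finset.coe_image, Set.mem_image, Finset.mem_coe] at hv
    obtain ⟨a, _, rfl⟩ := hv
    exact Set.mem_range_self a
  · rw [Finset.sum_image (fun a _ c _ h => k_inj hb hk h)]
    rfl

lemma digits_mem_IPkP (hb : 3 ≤ b) (hk : IsExpanding b k) {G : Finset ℤ} (hG : Digits G)
    (hpos : ∀ a ∈ G, 0 < a) : sumk k G ∈ IPkP k := by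
  classical
  refine ⟨G.image k, ?_, ?_⟩
  · intro v hv
    simp only [Finset.coe_image, Set.mem_image, Finset.mem_coe] at hv
    obtain ⟨a, ha, rfl⟩ := hv
    exact ⟨a, hpos a ha, rfl⟩
  · rw [Finset.sum_image (fun a _ c _ h => k_inj hb hk h)]
    rfl

lemma mem_IPk_iff (hb : 3 ≤ b) (hk : IsExpanding b k) (t : ℤ) :
    t ∈ IPk k ↔ ∃ G : Finset ℤ, Digits G ∧ t = sumk k G := by
  classical
  constructor
  · rintro ⟨F, hF, rfl⟩
    set g : ℤ → ℤ := fun v => if h : ∃ a, k a = v then Classical.choose h else 0 with hg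
    have hgk : ∀ v ∈ F, k (g v) = v := by
      intro v hv
      have hex : ∃ a, k a = v := hF hv
      simp only [hg, dif_pos hex]
      exact Classical.choose_spec hex
    have hginj : ∀ a ∈ F, ∀ c ∈ F, g a = g c → a = c := by
      intro a ha c hc h
      rw [← hgk a ha, ← hgk c hc, h]
    set G' := F.image g with hG'
    have hsum' : ∑ a ∈ G', k a = ∑ v ∈ F, v := by
      rw [hG', Finset.sum_image hginj]
      exact Finset.sum_congr rfl hgk
    set Gfix := G'.filter (fun a => -a ∈ G') with hGfix
    have hfixsub : Gfix ⊆ G' := Finset.filter_subset _ _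
    have hfixmem : ∀ a, a ∈ Gfix ↔ a ∈ G' ∧ -a ∈ G' := by
      intro a; simp [hGfix]
    have hfixsum : ∑ a ∈ Gfix, k a = 0 := by
      apply Finset.sum_involution (fun a _ => -a)
      · intro a _
        rw [hk.1]; ring
      · intro a _ hka
        have : a ≠ 0 := fun h => hka (by rw [h, k_zero hk])
        omega
      · intro a ha
        omega
      · intro a ha
        rw [hfixmem] at ha ⊢
        exact ⟨ha.2, by simpa using ha.1⟩
    refine ⟨G' \ Gfix, ⟨?_, ?_⟩, ?_⟩
    · intro h0
      rw [Finset.mem_sdiff] at h0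
      exact h0.2 ((hfixmem 0).mpr ⟨h0.1, by simpa using h0.1⟩)
    · intro a ha c hc habs
      rw [Finset.mem_sdiff] at ha hc
      rcases Int.natAbs_eq_natAbs_iff.mp habs with rfl | rfl
      · rfl
      · exfalso
        exact ha.2 ((hfixmem (-c)).mpr ⟨ha.1, by simpa using hc.1⟩)
    · have := Finset.sum_sdiff_eq_sub (f := k) hfixsub
      unfold sumk
      omega
  · rintro ⟨G, hG, rfl⟩
    exact digits_mem_IPk hb hk hG

lemma mem_IPkP_iff (hb : 3 ≤ b) (hk : IsExpanding b k) (t : ℤ) :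
    t ∈ IPkP k ↔ ∃ G : Finset ℤ, Digits G ∧ (∀ a ∈ G, 0 < a) ∧ t = sumk k G := by
  classical
  constructor
  · rintro ⟨F, hF, rfl⟩
    set g : ℤ → ℤ := fun v => if h : ∃ a, 0 < a ∧ k a = v then Classical.choose h else 0 with hg
    have hgs : ∀ v ∈ F, 0 < g v ∧ k (g v) = v := by
      intro v hv
      obtain ⟨a, ha, hka⟩ := hF hv
      have hex : ∃ a, 0 < a ∧ k a = v := ⟨a, ha, hka⟩
      simp only [hg, dif_pos hex]
      exact Classical.choose_spec hex
    have hginj : ∀ a ∈ F, ∀ c ∈ F, g a = g c → a = c := by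
      intro a ha c hc h
      rw [← (hgs a ha).2, ← (hgs c hc).2, h]
    refine ⟨F.image g, ⟨?_, ?_⟩, ?_, ?_⟩
    · intro h0
      simp only [Finset.mem_image] at h0
      obtain ⟨v, hv, hgv⟩ := h0
      have := (hgs v hv).1
      omega
    · intro a ha c hc habs
      simp only [Finset.mem_image] at ha hc
      obtain ⟨v, hv, rfl⟩ := ha
      obtain ⟨w, hw, rfl⟩ := hc
      have h1 := (hgs v hv).1
      have h2 := (hgs w hw).1
      omega
    · intro a ha
      simp only [Finset.mem_image] at ha
      obtain ⟨v, hv, rfl⟩ := ha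
      exact (hgs v hv).1
    · unfold sumk
      rw [Finset.sum_image hginj]
      exact (Finset.sum_congr rfl (fun v hv => (hgs v hv).2)).symm
  · rintro ⟨G, hG, hpos, rfl⟩
    exact digits_mem_IPkP hb hk hG hpos

lemma IPkP_subset_IPk : IPkP k ⊆ IPk k := by
  rintro t ⟨F, hF, rfl⟩
  exact ⟨F, fun v hv => (hF hv).imp (fun a ha => ha.2), rfl⟩

lemma zero_mem_IPk : (0:ℤ) ∈ IPk k := ⟨∅, by simp, by simp⟩
lemma zero_mem_IPkP : (0:ℤ) ∈ IPkP k := ⟨∅, by simp, by simp⟩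

lemma sumk_pos_digits_nonneg (hb : 3 ≤ b) (hk : IsExpanding b k) {G : Finset ℤ}
    (hpos : ∀ a ∈ G, 0 < a) : 0 ≤ sumk k G :=
  Finset.sum_nonneg (fun a ha => le_of_lt (k_pos_of_pos hb hk a (hpos a ha)))

lemma IPkP_nonneg (hb : 3 ≤ b) (hk : IsExpanding b k) {t : ℤ} (ht : t ∈ IPkP k) : 0 ≤ t := by
  obtain ⟨G, hG, hpos, rfl⟩ := (mem_IPkP_iff hb hk t).mp ht
  exact sumk_pos_digits_nonneg hb hk hpos

end ipk


section rbridge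
variable {b : ℕ} {k : ℤ → ℤ} {lab : ℕ → ℕ} {R : ℤ → ℕ →₀ ℕ}

lemma digits_sum_fin {G : Finset ℤ} (hG : Digits G) :
    ∃ j : Fin G.card → ℤ, (∀ i, j i ∈ G) ∧
      (∀ i₁ i₂ : Fin G.card, i₁ < i₂ → |j i₂| < |j i₁|) ∧
      ∀ {β : Type} [AddCommMonoid β] (f : ℤ → β), ∑ i, f (j i) = ∑ a ∈ G, f a := by
  classical
  set H := G.image Int.natAbs with hH
  have hcard : H.card = G.card :=
    Finset.card_image_of_injOn (fun a ha c hc h => hG.2 a ha c hc h)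
  set φ := H.orderIsoOfFin hcard with hφ
  set pick : ℕ → ℤ := fun h => if hex : ∃ a ∈ G, a.natAbs = h then hex.choose else 0 with hpick
  have hpickspec : ∀ h ∈ H, pick h ∈ G ∧ (pick h).natAbs = h := by
    intro h hh
    rw [hH, Finset.mem_image] at hh
    obtain ⟨a, ha, rfl⟩ := hh
    have hex : ∃ c ∈ G, c.natAbs = a.natAbs := ⟨a, ha, rfl⟩
    simp only [hpick, dif_pos hex]
    exact ⟨hex.choose_spec.1, hex.choose_spec.2⟩
  refine ⟨fun i => pick (φ i.rev : ℕ), ?_, ?_, ?_⟩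
  · intro i
    exact (hpickspec _ (φ i.rev).2).1
  · intro i₁ i₂ hlt
    have h1 := (hpickspec _ (φ i₁.rev).2).2
    have h2 := (hpickspec _ (φ i₂.rev).2).2
    have hrev : i₂.rev < i₁.rev := by
      rw [Fin.rev_lt_rev]; exact hlt
    have := φ.strictMono hrev
    rw [← Subtype.coe_lt_coe] at this
    have e1 : |pick (φ i₁.rev : ℕ)| = ((φ i₁.rev : ℕ) : ℤ) := by
      rw [Int.abs_eq_natAbs, h1]
    have e2 : |pick (φ i₂.rev : ℕ)| = ((φ i₂.rev : ℕ) : ℤ) := by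
      rw [Int.abs_eq_natAbs, h2]
    rw [e1, e2]
    exact_mod_cast this
  · intro β _ f
    have step1 : ∑ i : Fin G.card, f (pick (φ i.rev : ℕ))
        = ∑ i : Fin G.card, f (pick (φ i : ℕ)) :=
      Fintype.sum_bijective Fin.rev Fin.rev_bijective _ _ (fun i => rfl)
    have step2 : ∑ i : Fin G.card, f (pick (φ i : ℕ)) = ∑ x : H, f (pick (x : ℕ)) :=
      (Equiv.sum_comp φ.toEquiv (fun x => f (pick (x : ℕ)))).symm ▸ rfl
    have step3 : ∑ x : H, f (pick (x : ℕ)) = ∑ h ∈ H, f (pick h) :=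
      Finset.sum_coe_sort H (fun h => f (pick h))
    have step4 : ∑ h ∈ H, f (pick h) = ∑ a ∈ G, f a := by
      apply Finset.sum_bij (i := fun h _ => pick h)
      · intro h hh; exact (hpickspec h hh).1
      · intro h1 hh1 h2 hh2 heq
        rw [← (hpickspec h1 hh1).2, ← (hpickspec h2 hh2).2, heq]
      · intro a ha
        refine ⟨a.natAbs, Finset.mem_image_of_mem _ ha, ?_⟩
        have hs := hpickspec a.natAbs (Finset.mem_image_of_mem _ ha)
        exact hG.2 _ hs.1 a ha hs.2
      · intro h hh; rfl
    rw [step1, step2, step3, step4]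
  
lemma R_of_digits (hR : LengthVecSpec k lab R) {G : Finset ℤ} (hG : Digits G) :
    R (sumk k G) = rvec lab G := by
  obtain ⟨j, hmem, hdec, hsum⟩ := digits_sum_fin hG
  have hexp : IsExpansion k (sumk k G) G.card j :=
    ⟨fun i => mem_digits_ne_zero hG (hmem i), hdec, (hsum k).symm⟩
  rw [hR _ _ _ hexp]
  exact hsum (fun a => Finsupp.single (lab a.natAbs) 1)

lemma R_zero (hR : LengthVecSpec k lab R) : R 0 = 0 := by
  have hexp : IsExpansion k 0 0 (fun i => i.elim0) :=
    ⟨fun i => i.elim0, fun i => i.elim0, by simp⟩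
  rw [hR _ _ _ hexp]
  simp

lemma digits_union {G₁ G₂ : Finset ℤ} (h₁ : Digits G₁) (h₂ : Digits G₂)
    (hd : ∀ a ∈ G₁, ∀ c ∈ G₂, a.natAbs ≠ c.natAbs) :
    Digits (G₁ ∪ G₂) ∧ Disjoint G₁ G₂ := by
  constructor
  · constructor
    · intro h0
      rcases Finset.mem_union.mp h0 with h | h
      · exact h₁.1 h
      · exact h₂.1 h
    · intro a ha c hc habs
      rcases Finset.mem_union.mp ha with ha' | ha' <;> rcases Finset.mem_union.mp hc with hc' | hc'
      · exact h₁.2 a ha' c hc' habs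
      · exact absurd habs (hd a ha' c hc')
      · exact absurd habs.symm (hd c hc' a ha')
      · exact h₂.2 a ha' c hc' habs
  · rw [Finset.disjoint_left]
    intro a ha hc
    exact hd a ha a hc rfl

lemma sumk_union {G₁ G₂ : Finset ℤ} (hd : Disjoint G₁ G₂) :
    sumk k (G₁ ∪ G₂) = sumk k G₁ + sumk k G₂ := Finset.sum_union hd

lemma rvec_union {G₁ G₂ : Finset ℤ} (hd : Disjoint G₁ G₂) :
    rvec lab (G₁ ∪ G₂) = rvec lab G₁ + rvec lab G₂ := Finset.sum_union hd

lemma digits_neg {G : Finset ℤ} (hG : Digits G) : Digits (G.image Neg.neg) := by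
  classical
  constructor
  · intro h0
    rw [Finset.mem_image] at h0
    obtain ⟨a, ha, h⟩ := h0
    have : a = 0 := by omega
    exact hG.1 (this ▸ ha)
  · intro a ha c hc habs
    rw [Finset.mem_image] at ha hc
    obtain ⟨a', ha', rfl⟩ := ha
    obtain ⟨c', hc', rfl⟩ := hc
    have : a'.natAbs = c'.natAbs := by omega
    rw [hG.2 a' ha' c' hc' this]

lemma sumk_neg (hk : IsExpanding b k) {G : Finset ℤ} :
    sumk k (G.image Neg.neg) = - sumk k G := by
  classical
  unfold sumk
  rw [Finset.sum_image (fun a _ c _ h => by omega)]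
  rw [← Finset.sum_neg_distrib]
  exact Finset.sum_congr rfl (fun a _ => hk.1 a)

lemma rvec_neg {G : Finset ℤ} : rvec lab (G.image Neg.neg) = rvec lab G := by
  classical
  unfold rvec
  rw [Finset.sum_image (fun a _ c _ h => by omega)]
  exact Finset.sum_congr rfl (fun a _ => by simp)

lemma rvec_ne_zero {G : Finset ℤ} (hne : G.Nonempty) : rvec lab G ≠ 0 := by
  obtain ⟨a, ha⟩ := hne
  intro h
  have happ : (rvec lab G) (lab a.natAbs) = 0 := by rw [h]; rfl
  unfold rvec at happ
  rw [Finsupp.finset_sum_apply] at happ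
  have hterm : (Finsupp.single (lab a.natAbs) 1 : ℕ →₀ ℕ) (lab a.natAbs) = 1 := by simp
  have hle := Finset.single_le_sum
    (f := fun c => (Finsupp.single (lab c.natAbs) 1 : ℕ →₀ ℕ) (lab a.natAbs))
    (fun c _ => Nat.zero_le _) ha
  rw [hterm] at hle
  omega

lemma rvec_pos {G : Finset ℤ} (hne : G.Nonempty) : 0 < rvec lab G :=
  lt_of_le_of_ne zero_le (Ne.symm (rvec_ne_zero hne))

end rbridge


section reps
variable {b : ℕ} {k : ℤ → ℤ} {D : ℕ → Set ℕ} {lab : ℕ → ℕ}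

lemma lab_eq_of_mem (hD : PartitionSpec D lab) {n : ℕ} {ℓ : ℕ} (hn : n ∈ D ℓ) : lab n = ℓ := by
  by_contra h
  have := hD.2.1 ℓ (lab n) (Ne.symm h)
  have hmem : n ∈ D ℓ ∩ D (lab n) := ⟨hn, hD.2.2 n⟩
  rw [this] at hmem
  exact hmem

lemma exists_rep (hD : PartitionSpec D lab) (r : ℕ →₀ ℕ) (C : ℕ) :
    ∃ G : Finset ℤ, Digits G ∧ (∀ a ∈ G, (C:ℤ) < a) ∧ rvec lab G = r ∧
      (r ≠ 0 → G.Nonempty) := by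
  classical
  have hinf : ∀ ℓ : ℕ, (D ℓ \ Set.Iic C).Infinite :=
    fun ℓ => (hD.1 ℓ).diff (Set.finite_Iic C)
  have hS : ∀ ℓ : ℕ, ∃ S : Finset ℕ, ↑S ⊆ D ℓ \ Set.Iic C ∧ S.card = r ℓ :=
    fun ℓ => (hinf ℓ).exists_subset_card_eq (r ℓ)
  choose S hSsub hScard using hS
  set G : Finset ℤ := r.support.biUnion (fun ℓ => (S ℓ).image (fun n : ℕ => (n:ℤ))) with hG
  have hmemG : ∀ a : ℤ, a ∈ G ↔ ∃ ℓ ∈ r.support, ∃ n ∈ S ℓ, (n:ℤ) = a := by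
    intro a
    simp [hG]
  have hgtC : ∀ a ∈ G, (C:ℤ) < a := by
    intro a ha
    obtain ⟨ℓ, -, n, hn, rfl⟩ := (hmemG a).mp ha
    have := hSsub ℓ hn
    have : ¬ n ≤ C := this.2
    exact_mod_cast by omega
  have hdig : Digits G := by
    constructor
    · intro h0
      have := hgtC 0 h0
      omega
    · intro a ha c hc habs
      have h1 := hgtC a ha
      have h2 := hgtC c hc
      omega
  have hdisj : ∀ ℓ₁ ∈ r.support, ∀ ℓ₂ ∈ r.support, ℓ₁ ≠ ℓ₂ →
      Disjoint ((S ℓ₁).image (fun n : ℕ => (n:ℤ))) ((S ℓ₂).image (fun n : ℕ => (n:ℤ))) := by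
    intro ℓ₁ _ ℓ₂ _ hne
    rw [Finset.disjoint_left]
    intro a ha1 ha2
    rw [Finset.mem_image] at ha1 ha2
    obtain ⟨n1, hn1, rfl⟩ := ha1
    obtain ⟨n2, hn2, he⟩ := ha2
    have : n2 = n1 := by exact_mod_cast he
    subst this
    have hd := hD.2.1 ℓ₁ ℓ₂ hne
    have : n2 ∈ D ℓ₁ ∩ D ℓ₂ := ⟨(hSsub ℓ₁ hn1).1, (hSsub ℓ₂ hn2).1⟩
    rw [hd] at this
    exact this
  have hrv : rvec lab G = r := by
    unfold rvec
    rw [hG, Finset.sum_biUnion]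
    · have hstep : ∀ ℓ ∈ r.support,
          ∑ a ∈ (S ℓ).image (fun n : ℕ => (n:ℤ)), Finsupp.single (lab a.natAbs) 1
            = Finsupp.single ℓ (r ℓ) := by
        intro ℓ hℓ
        rw [Finset.sum_image (by intro x _ y _ h; exact Nat.cast_injective h)]
        have : ∀ n ∈ S ℓ, (Finsupp.single (lab ((n:ℤ)).natAbs) 1 : ℕ →₀ ℕ)
            = Finsupp.single ℓ 1 := by
          intro n hn
          have hlabn : lab n = ℓ := lab_eq_of_mem hD (hSsub ℓ hn).1
          simp [Int.natAbs_natCast, hlabn]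
        rw [Finset.sum_congr rfl this, Finset.sum_const, hScard]
        rw [Finsupp.smul_single]
        simp
      rw [Finset.sum_congr rfl hstep]
      exact Finsupp.sum_single r
    · exact fun ℓ₁ h1 ℓ₂ h2 hne => hdisj ℓ₁ h1 ℓ₂ h2 hne
  refine ⟨G, hdig, hgtC, hrv, ?_⟩
  intro hr0
  obtain ⟨ℓ, hℓ⟩ := Finsupp.support_nonempty_iff.mpr hr0
  have hcard : 0 < (S ℓ).card := by
    rw [hScard]
    exact Nat.pos_of_ne_zero (Finsupp.mem_support_iff.mp hℓ)
  obtain ⟨n, hn⟩ := Finset.card_pos.mp hcard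
  exact ⟨(n:ℤ), (hmemG _).mpr ⟨ℓ, hℓ, n, hn, rfl⟩⟩

lemma sumk_gt (hb : 3 ≤ b) (hk : IsExpanding b k) (hk1 : (b : ℤ) + 1 < k 1)
    {G : Finset ℤ} {C : ℕ} (hgt : ∀ a ∈ G, (C:ℤ) < a) (hne : G.Nonempty) :
    (C:ℤ) < sumk k G := by
  obtain ⟨a, ha⟩ := hne
  have hsplit : sumk k G = k a + ∑ c ∈ G.erase a, k c := (Finset.add_sum_erase _ _ ha).symm
  have hrest : 0 ≤ ∑ c ∈ G.erase a, k c :=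
    Finset.sum_nonneg (fun c hc =>
      le_of_lt (k_pos_of_pos hb hk c (by have := hgt c (Finset.mem_of_mem_erase hc); omega)))
  have haC := hgt a ha
  have hka : (a:ℤ) ≤ k a := by
    have h1 : a = ((a.natAbs : ℕ) : ℤ) := by omega
    rw [h1]
    exact_mod_cast k_ge hb hk hk1 a.natAbs (by omega)
  omega

end reps


section topol

lemma chiB_iff (A : Set ℤ) (t : ℤ) : chiB A t = true ↔ t ∈ A := by
  unfold chiB
  exact @decide_eq_true_iff _ (Classical.propDecidable _)

lemma chiB_eq_chiB {A : Set ℤ} {u v : ℤ} : chiB A u = chiB A v ↔ (u ∈ A ↔ v ∈ A) := by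
  unfold chiB
  exact decide_eq_decide

lemma labelInd_eq {M₁ M₂ : Set (ℕ →₀ ℕ)} {m : ℕ →₀ ℕ} :
    labelInd M₁ m = labelInd M₂ m ↔ (m ∈ M₁ ↔ m ∈ M₂) := by
  unfold labelInd
  exact decide_eq_decide

lemma pi_nhds_iff {ι : Type*} (g : ι → Bool) (W : Set (ι → Bool)) :
    W ∈ 𝓝 g ↔ ∃ F : Finset ι, {g' : ι → Bool | ∀ i ∈ F, g' i = g i} ⊆ W := by
  rw [nhds_pi, Filter.mem_pi]
  constructor
  · rintro ⟨I, hIfin, V, hV, hsub⟩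
    refine ⟨hIfin.toFinset, ?_⟩
    intro g' hg'
    apply hsub
    intro i hi
    have hgi : g i ∈ V i := by
      have := hV i
      rw [nhds_discrete, Filter.mem_pure] at this
      exact this
    have : g' i = g i := hg' i (hIfin.mem_toFinset.mpr hi)
    rw [this]
    exact hgi
  · rintro ⟨F, hsub⟩
    refine ⟨↑F, F.finite_toSet, fun i => {g i}, ?_, ?_⟩
    · intro i
      rw [nhds_discrete, Filter.mem_pure]
      rfl
    · intro g' hg'
      apply hsub
      intro i hi
      exact hg' i (Finset.mem_coe.mpr hi)

lemma recurrentLabel_iff (M : Set (ℕ →₀ ℕ)) :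
    RecurrentLabel M ↔ ∀ F : Finset (ℕ →₀ ℕ), ∃ r : ℕ →₀ ℕ, 0 < r ∧
      ∀ m ∈ F, (m ∈ M ↔ m + r ∈ M) := by
  unfold RecurrentLabel
  rw [@mem_closure_iff_nhds _ labTop]
  have hnhds : @nhds _ labTop M = Filter.comap labelInd (𝓝 (labelInd M)) :=
    nhds_induced labelInd M
  constructor
  · intro h F
    have hW : {g' : (ℕ →₀ ℕ) → Bool | ∀ m ∈ F, g' m = labelInd M m} ∈ 𝓝 (labelInd M) :=
      (pi_nhds_iff _ _).mpr ⟨F, subset_rfl⟩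
    have ht : labelInd ⁻¹' {g' : (ℕ →₀ ℕ) → Bool | ∀ m ∈ F, g' m = labelInd M m}
        ∈ @nhds _ labTop M := by
      rw [hnhds]
      exact Filter.preimage_mem_comap hW
    obtain ⟨M', hM't, hM'S⟩ := h _ ht
    obtain ⟨r, hr, rfl⟩ := hM'S
    refine ⟨r, hr, fun m hm => ?_⟩
    have := hM't m hm
    rw [labelInd_eq] at this
    have hmem : m ∈ Msub M r ↔ m + r ∈ M := Iff.rfl
    rw [hmem] at this
    exact this.symm
  · intro h t ht
    rw [hnhds, Filter.mem_comap] at ht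
    obtain ⟨W, hW, hsub⟩ := ht
    obtain ⟨F, hF⟩ := (pi_nhds_iff _ _).mp hW
    obtain ⟨r, hr, hiff⟩ := h F
    refine ⟨Msub M r, ?_, ⟨r, hr, rfl⟩⟩
    apply hsub
    apply hF
    intro m hm
    rw [labelInd_eq]
    exact (hiff m hm).symm

lemma recPt_of_forall {x : ℤ → Bool}
    (h : ∀ T : Finset ℤ, ∀ a : ℤ, ∃ n : ℤ, a ≤ n ∧ ∀ s ∈ T, x (s + n) = x s) :
    RecPt x := by
  left
  rw [mapClusterPt_iff_frequently]
  intro U hU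
  obtain ⟨T, hT⟩ := (pi_nhds_iff x U).mp hU
  rw [frequently_atTop]
  intro a
  obtain ⟨n, hn, hagree⟩ := h T a
  exact ⟨n, hn, hT (fun s hs => hagree s hs)⟩

lemma recPt_elim {x : ℤ → Bool} (h : RecPt x) (T : Finset ℤ) (a : ℕ) :
    ∃ n : ℤ, (a : ℤ) ≤ |n| ∧ ∀ s ∈ T, x (s + n) = x s := by
  have hU : {g' : ℤ → Bool | ∀ s ∈ T, g' s = x s} ∈ 𝓝 x :=
    (pi_nhds_iff _ _).mpr ⟨T, subset_rfl⟩
  rcases h with h | h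
  · rw [mapClusterPt_iff_frequently] at h
    have := h _ hU
    rw [frequently_atTop] at this
    obtain ⟨n, hn, hmem⟩ := this (a : ℤ)
    exact ⟨n, by rw [abs_of_nonneg (by omega)]; omega, fun s hs => hmem s hs⟩
  · rw [mapClusterPt_iff_frequently] at h
    have := h _ hU
    rw [frequently_atBot] at this
    obtain ⟨n, hn, hmem⟩ := this (-(a : ℤ))
    exact ⟨n, by rw [abs_of_nonpos (by omega)]; omega, fun s hs => hmem s hs⟩

lemma recPt_const_of_empty {x : ℤ → Bool} (h : ∀ n s : ℤ, x (s + n) = x s) : RecPt x :=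
  recPt_of_forall (fun T a => ⟨a, le_refl a, fun s _ => h a s⟩)

end topol


section util
variable {b : ℕ} {k : ℤ → ℤ} {lab : ℕ → ℕ}

lemma sumk_empty : sumk k ∅ = 0 := Finset.sum_empty

lemma digits_small (hb : 3 ≤ b) (hk : IsExpanding b k) {G : Finset ℤ} (hG : Digits G)
    {C : ℕ} {N : ℤ} (hC : ∀ p : ℕ, C < p → 3 * N < k (p:ℤ))
    (hbound : |sumk k G| ≤ N) : ∀ c ∈ G, c.natAbs ≤ C := by
  intro c hc
  by_contra h
  have hsep := sep_lemma hb hk hG Digits.empty hC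
    (by rw [sumk_empty, sub_zero]; exact hbound)
  have := (hsep c (by omega)).mp hc
  simp at this

lemma natAbs_gt_of_gt {C : ℕ} {c : ℤ} (h : (C:ℤ) < c) : C < c.natAbs := by omega

/-- Decomposition of a digit set whose sum is close to `sumk G`, `G` with high digits. -/
lemma lowpart (hb : 3 ≤ b) (hk : IsExpanding b k)
    {C : ℕ} {N : ℤ} (hC : ∀ p : ℕ, C < p → 3 * N < k (p:ℤ))
    {G Gu : Finset ℤ} (hG : Digits G) (hGgt : ∀ g ∈ G, (C:ℤ) < g)
    (hGu : Digits Gu) (heq : |sumk k Gu - sumk k G| ≤ N) :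
    ∃ L : Finset ℤ, Digits L ∧ L ⊆ Gu ∧ (∀ c ∈ L, c.natAbs ≤ C) ∧
      Gu = L ∪ G ∧ Disjoint L G ∧ sumk k Gu = sumk k L + sumk k G ∧
      rvec lab Gu = rvec lab L + rvec lab G := by
  classical
  have hsep := sep_lemma hb hk hGu hG hC heq
  set L := Gu.filter (fun c => c.natAbs ≤ C) with hL
  set H := Gu.filter (fun c => ¬ c.natAbs ≤ C) with hH
  have hHG : H = G := by
    ext c
    rw [hH, Finset.mem_filter]
    constructor
    · rintro ⟨hcGu, hcC⟩
      exact (hsep c (by omega)).mp hcGu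
    · intro hcG
      have hgt := hGgt c hcG
      have : C < c.natAbs := natAbs_gt_of_gt hgt
      exact ⟨(hsep c this).mpr hcG, by omega⟩
  have hunion : Gu = L ∪ G := by
    rw [← hHG, hL, hH]
    exact (Finset.filter_union_filter_not_eq _ Gu).symm
  have hdisj : Disjoint L G := by
    rw [Finset.disjoint_left]
    intro c hcL hcG
    rw [hL, Finset.mem_filter] at hcL
    have := natAbs_gt_of_gt (hGgt c hcG)
    omega
  refine ⟨L, hGu.subset (Finset.filter_subset _ _), Finset.filter_subset _ _,
    fun c hc => (Finset.mem_filter.mp hc).2, hunion, hdisj, ?_, ?_⟩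
  · rw [hunion]; exact sumk_union hdisj
  · rw [hunion]; exact rvec_union hdisj

lemma digits_natAbs_disjoint {C : ℕ} {G₁ G₂ : Finset ℤ}
    (h₁ : ∀ c ∈ G₁, c.natAbs ≤ C) (h₂ : ∀ g ∈ G₂, (C:ℤ) < g) :
    ∀ a ∈ G₁, ∀ c ∈ G₂, a.natAbs ≠ c.natAbs := by
  intro a ha c hc
  have := h₁ a ha
  have := natAbs_gt_of_gt (h₂ c hc)
  omega

end util


section main
variable {b : ℕ} {k : ℤ → ℤ} {D : ℕ → Set ℕ} {lab : ℕ → ℕ} {R : ℤ → ℕ →₀ ℕ}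
variable {M : Set (ℕ →₀ ℕ)}

lemma mem_setA {t : ℤ} : t ∈ setA k R M ↔ t ∈ IPk k ∧ R t ∈ M := Iff.rfl

lemma mem_setAP {t : ℤ} : t ∈ setAP k R M ↔ (t ∈ IPk k ∧ R t ∈ M) ∧ t ∈ IPkP k := Iff.rfl

lemma digits_natAbs_disjoint' {C : ℕ} {G₁ G₂ : Finset ℤ}
    (h₁ : ∀ c ∈ G₁, c.natAbs ≤ C) (h₂ : ∀ g ∈ G₂, C < g.natAbs) :
    ∀ a ∈ G₁, ∀ c ∈ G₂, a.natAbs ≠ c.natAbs := by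
  intro a ha c hc
  have := h₁ a ha
  have := h₂ c hc
  omega

lemma forward_shift (hb : 3 ≤ b) (hk : IsExpanding b k) (hk1 : (b:ℤ)+1 < k 1)
    (hD : PartitionSpec D lab) (hR : LengthVecSpec k lab R)
    (hQ : ∀ F : Finset (ℕ →₀ ℕ), ∃ r : ℕ →₀ ℕ, 0 < r ∧ ∀ m ∈ F, (m ∈ M ↔ m + r ∈ M))
    (T : Finset ℤ) (a : ℤ) :
    ∃ n : ℤ, a ≤ n ∧ (∀ s ∈ T, xL k R M (s + n) = xL k R M s) ∧
      (∀ s ∈ T, xLP k R M (s + n) = xLP k R M s) := by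
  classical
  set N : ℤ := ∑ s ∈ T, |s| with hN
  have hNmem : ∀ s ∈ T, |s| ≤ N := fun s hs =>
    Finset.single_le_sum (fun c _ => abs_nonneg c) hs
  have hN0 : 0 ≤ N := Finset.sum_nonneg (fun c _ => abs_nonneg c)
  obtain ⟨C₁, hC₁1, hC₁⟩ := k_threshold hb hk hk1 (3 * N)
  obtain ⟨r, hr, hrF⟩ := hQ (T.image R)
  set C := max C₁ a.toNat with hCdef
  obtain ⟨G, hGdig, hGgt, hGrv, hGne⟩ := exists_rep hD r C
  have hGne' : G.Nonempty := hGne hr.ne'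
  have hGgtC₁ : ∀ g ∈ G, (C₁:ℤ) < g := by
    intro g hg
    have h1 : (C₁ : ℤ) ≤ (C : ℤ) := by
      have : C₁ ≤ C := le_max_left _ _
      exact_mod_cast this
    have := hGgt g hg
    omega
  have hGpos : ∀ g ∈ G, (0:ℤ) < g := by
    intro g hg
    have := hGgt g hg
    omega
  set t := sumk k G with ht
  have htgt : (C:ℤ) < t := sumk_gt hb hk hk1 hGgt hGne'
  have hta : a ≤ t := by
    have h1 : a ≤ (a.toNat : ℤ) := Int.self_le_toNat a
    have h2 : (a.toNat : ℤ) ≤ (C:ℤ) := by exact_mod_cast le_max_right C₁ a.toNat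
    omega
  -- digits of elements of T are below C₁
  have hsmall : ∀ s ∈ T, ∀ {Gs : Finset ℤ}, Digits Gs → s = sumk k Gs →
      ∀ c ∈ Gs, c.natAbs ≤ C₁ := by
    intro s hs Gs hGs hseq
    apply digits_small hb hk hGs hC₁
    rw [← hseq]
    exact hNmem s hs
  refine ⟨t, hta, ?_, ?_⟩
  · -- agreement for xL
    intro s hs
    unfold xL
    rw [chiB_eq_chiB]
    by_cases hsIP : s ∈ IPk k
    · obtain ⟨Gs, hGs, hseq⟩ := (mem_IPk_iff hb hk s).mp hsIP
      have hGsC := hsmall s hs hGs hseq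
      have hdisjAbs := digits_natAbs_disjoint hGsC hGgtC₁
      obtain ⟨hudig, hudisj⟩ := digits_union hGs hGdig hdisjAbs
      have hsum : s + t = sumk k (Gs ∪ G) := by
        rw [sumk_union hudisj, hseq]
      have hRs : R s = rvec lab Gs := by rw [hseq, R_of_digits hR hGs]
      have hRst : R (s + t) = R s + r := by
        rw [hsum, R_of_digits hR hudig, rvec_union hudisj, hRs, hGrv]
      have hstIP : s + t ∈ IPk k := by
        rw [hsum]; exact digits_mem_IPk hb hk hudig
      have hiff := hrF (R s) (Finset.mem_image_of_mem R hs)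
      rw [mem_setA, mem_setA, hRst]
      constructor
      · rintro ⟨-, hm⟩
        exact ⟨hsIP, hiff.mpr hm⟩
      · rintro ⟨-, hm⟩
        exact ⟨hstIP, hiff.mp hm⟩
    · have hstNIP : s + t ∉ IPk k := by
        intro hmem
        obtain ⟨Gu, hGu, hueq⟩ := (mem_IPk_iff hb hk _).mp hmem
        have hclose : |sumk k Gu - sumk k G| ≤ N := by
          rw [← hueq, ← ht]
          have : s + t - t = s := by ring
          rw [this]
          exact hNmem s hs
        obtain ⟨L, hLdig, -, -, -, -, hLsum, -⟩ :=
          lowpart (lab := lab) hb hk hC₁ hGdig hGgtC₁ hGu hclose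
        apply hsIP
        have hseq : s = sumk k L := by
          rw [← hueq, ← ht] at hLsum
          omega
        rw [hseq]
        exact digits_mem_IPk hb hk hLdig
      rw [mem_setA, mem_setA]
      constructor
      · rintro ⟨hmem, -⟩
        exact absurd hmem hstNIP
      · rintro ⟨hmem, -⟩
        exact absurd hmem hsIP
  · -- agreement for xLP
    intro s hs
    unfold xLP
    rw [chiB_eq_chiB]
    by_cases hsIP : s ∈ IPkP k
    · obtain ⟨Gs, hGs, hGspos, hseq⟩ := (mem_IPkP_iff hb hk s).mp hsIP
      have hGsC := hsmall s hs hGs hseq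
      have hdisjAbs := digits_natAbs_disjoint hGsC hGgtC₁
      obtain ⟨hudig, hudisj⟩ := digits_union hGs hGdig hdisjAbs
      have hsum : s + t = sumk k (Gs ∪ G) := by
        rw [sumk_union hudisj, hseq]
      have hupos : ∀ g ∈ Gs ∪ G, (0:ℤ) < g := by
        intro g hg
        rcases Finset.mem_union.mp hg with h | h
        · exact hGspos g h
        · exact hGpos g h
      have hRs : R s = rvec lab Gs := by rw [hseq, R_of_digits hR hGs]
      have hRst : R (s + t) = R s + r := by
        rw [hsum, R_of_digits hR hudig, rvec_union hudisj, hRs, hGrv]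
      have hstIP : s + t ∈ IPkP k := by
        rw [hsum]; exact digits_mem_IPkP hb hk hudig hupos
      have hsIPk : s ∈ IPk k := IPkP_subset_IPk hsIP
      have hstIPk : s + t ∈ IPk k := IPkP_subset_IPk hstIP
      have hiff := hrF (R s) (Finset.mem_image_of_mem R hs)
      rw [mem_setAP, mem_setAP, hRst]
      constructor
      · rintro ⟨⟨-, hm⟩, -⟩
        exact ⟨⟨hsIPk, hiff.mpr hm⟩, hsIP⟩
      · rintro ⟨⟨-, hm⟩, -⟩
        exact ⟨⟨hstIPk, hiff.mp hm⟩, hstIP⟩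
    · have hstNIP : s + t ∉ IPkP k := by
        intro hmem
        obtain ⟨Gu, hGu, hGupos, hueq⟩ := (mem_IPkP_iff hb hk _).mp hmem
        have hclose : |sumk k Gu - sumk k G| ≤ N := by
          rw [← hueq, ← ht]
          have : s + t - t = s := by ring
          rw [this]
          exact hNmem s hs
        obtain ⟨L, hLdig, hLsub, -, -, -, hLsum, -⟩ :=
          lowpart (lab := lab) hb hk hC₁ hGdig hGgtC₁ hGu hclose
        apply hsIP
        have hseq : s = sumk k L := by
          rw [← hueq, ← ht] at hLsum
          omega
        rw [hseq]
        exact digits_mem_IPkP hb hk hLdig (fun g hg => hGupos g (hLsub hg))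
      rw [mem_setAP, mem_setAP]
      constructor
      · rintro ⟨-, hmem⟩
        exact absurd hmem hstNIP
      · rintro ⟨-, hmem⟩
        exact absurd hmem hsIP

end main


section backward
variable {b : ℕ} {k : ℤ → ℤ} {D : ℕ → Set ℕ} {lab : ℕ → ℕ} {R : ℤ → ℕ →₀ ℕ}
variable {M : Set (ℕ →₀ ℕ)}

/-- Common setup for the backward directions: representatives, window, recurrence time. -/
lemma backward_setup (hb : 3 ≤ b) (hk : IsExpanding b k) (hk1 : (b:ℤ)+1 < k 1)
    (hD : PartitionSpec D lab) (hR : LengthVecSpec k lab R)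
    {x : ℤ → Bool} (hrec : RecPt x) (F : Finset (ℕ →₀ ℕ)) :
    ∃ (G' : (ℕ →₀ ℕ) → Finset ℤ) (C₀ : ℕ) (K : ℤ) (n : ℤ),
      (∀ m, Digits (G' m)) ∧ (∀ m, ∀ g ∈ G' m, (0:ℤ) < g) ∧
      (∀ m, rvec lab (G' m) = m) ∧
      (∀ m ∈ F, ∀ g ∈ G' m, g.natAbs ≤ C₀) ∧
      K = ∑ i ∈ Finset.range (C₀+1), k (i:ℤ) ∧ 0 ≤ K ∧
      (∀ m ∈ F, |sumk k (G' m)| ≤ K) ∧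
      K + 1 ≤ |n| ∧
      (∀ s : ℤ, |s| ≤ 2*K → x (s + n) = x s) := by
  classical
  choose G' hdig hpos hrv _ using fun m : ℕ →₀ ℕ => exists_rep (lab := lab) hD m 0
  have hpos' : ∀ m, ∀ g ∈ G' m, (0:ℤ) < g := by
    intro m g hg
    have := hpos m g hg
    exact_mod_cast this
  set C₀ := F.sup (fun m => (G' m).sup (fun g => g.natAbs)) with hC₀
  have hC₀b : ∀ m ∈ F, ∀ g ∈ G' m, g.natAbs ≤ C₀ :=
    fun m hm g hg => le_trans (Finset.le_sup hg)
      (Finset.le_sup (f := fun m => (G' m).sup (fun g => g.natAbs)) hm)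
  set K := ∑ i ∈ Finset.range (C₀+1), k (i:ℤ) with hK
  have hK0 : 0 ≤ K := Finset.sum_nonneg (fun i _ => k_nonneg hb hk i)
  have htm_bound : ∀ m ∈ F, |sumk k (G' m)| ≤ K := fun m hm =>
    sumk_bound hb hk (hdig m) (fun a ha => Nat.lt_succ_of_le (hC₀b m hm a ha))
  obtain ⟨n, hnK, hag⟩ := recPt_elim hrec (Finset.Icc (-(2*K)) (2*K)) (K+1).toNat
  have hnK' : K + 1 ≤ |n| := by
    have : ((K+1).toNat : ℤ) = K + 1 := Int.toNat_of_nonneg (by omega)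
    omega
  refine ⟨G', C₀, K, n, hdig, hpos', hrv, hC₀b, hK, hK0, htm_bound, hnK', ?_⟩
  intro s hsbound
  apply hag
  rw [Finset.mem_Icc]
  constructor <;> [skip; skip] <;> cases abs_le.mp hsbound <;> omega

lemma backward_xL (hb : 3 ≤ b) (hk : IsExpanding b k) (hk1 : (b:ℤ)+1 < k 1)
    (hD : PartitionSpec D lab) (hR : LengthVecSpec k lab R) (hM : IsLabel M)
    (h0 : (0 : ℕ →₀ ℕ) ∈ M) (hrec : RecPt (xL k R M)) :
    ∀ F : Finset (ℕ →₀ ℕ), ∃ r : ℕ →₀ ℕ, 0 < r ∧ ∀ m ∈ F, (m ∈ M ↔ m + r ∈ M) := by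
  classical
  intro F
  obtain ⟨G', C₀, K, n, hdig, hpos, hrv, hC₀b, hK, hK0, htm_bound, hnK, hag⟩ :=
    backward_setup hb hk hk1 hD hR hrec F
  set x := xL k R M with hx
  have hx0 : x 0 = true := (chiB_iff _ _).mpr ⟨zero_mem_IPk, by rw [R_zero hR]; exact h0⟩
  have hxn : x n = true := by
    have h := hag 0 (by simpa using hK0)
    rw [zero_add] at h
    rw [h, hx0]
  have hnA : n ∈ setA k R M := (chiB_iff _ _).mp hxn
  obtain ⟨Gn, hGn, hneq⟩ := (mem_IPk_iff hb hk n).mp hnA.1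
  set Gl := Gn.filter (fun g => g.natAbs ≤ C₀) with hGldef
  set Gh := Gn.filter (fun g => ¬ g.natAbs ≤ C₀) with hGhdef
  have hGl : Digits Gl := hGn.subset (Finset.filter_subset _ _)
  have hGh : Digits Gh := hGn.subset (Finset.filter_subset _ _)
  have hsplit : sumk k Gl + sumk k Gh = sumk k Gn :=
    Finset.sum_filter_add_sum_filter_not _ _ k
  have hrsplit : rvec lab Gl + rvec lab Gh = rvec lab Gn :=
    Finset.sum_filter_add_sum_filter_not _ _ _
  have hGlK : |sumk k Gl| ≤ K := by
    rw [hK]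
    exact sumk_bound hb hk hGl
      (fun a ha => Nat.lt_succ_of_le (Finset.mem_filter.mp ha).2)
  have hRn : R n = rvec lab Gn := by rw [hneq, R_of_digits hR hGn]
  have hGlempty : Gl = ∅ := by
    by_contra hGlne
    set s := -(2 * sumk k Gl) with hs
    have hsb : |s| ≤ 2*K := by
      rw [hs, abs_neg, abs_mul]
      have : |(2:ℤ)| = 2 := by norm_num
      rw [this]
      omega
    have hGl' : Digits (Gl.image Neg.neg) := digits_neg hGl
    have hsum' : sumk k (Gl.image Neg.neg) = - sumk k Gl := sumk_neg hk
    have hGl'C : ∀ c ∈ Gl.image Neg.neg, c.natAbs ≤ C₀ := by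
      intro c hc
      rw [Finset.mem_image] at hc
      obtain ⟨g, hg, rfl⟩ := hc
      have := (Finset.mem_filter.mp hg).2
      omega
    have hGhgt : ∀ g ∈ Gh, C₀ < g.natAbs := by
      intro g hg
      have := (Finset.mem_filter.mp hg).2
      omega
    obtain ⟨hudig, hudisj⟩ := digits_union hGl' hGh (digits_natAbs_disjoint' hGl'C hGhgt)
    have husum : sumk k ((Gl.image Neg.neg) ∪ Gh) = s + n := by
      rw [sumk_union hudisj, hsum', hneq]
      omega
    have hurv : rvec lab ((Gl.image Neg.neg) ∪ Gh) = rvec lab Gn := by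
      rw [rvec_union hudisj, rvec_neg, hrsplit]
    have huA : s + n ∈ setA k R M := by
      rw [mem_setA]
      constructor
      · rw [← husum]
        exact digits_mem_IPk hb hk hudig
      · rw [← husum, R_of_digits hR hudig, hurv, ← hRn]
        exact hnA.2
    have hxs : x s = true := by
      rw [← hag s hsb]
      exact (chiB_iff _ _).mpr huA
    have hsA : s ∈ setA k R M := (chiB_iff _ _).mp hxs
    obtain ⟨G2, hG2, h2eq⟩ := (mem_IPk_iff hb hk s).mp hsA.1
    have h2 : 2 * sumk k (Gl.image Neg.neg) = sumk k G2 := by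
      rw [hsum']
      omega
    have := two_lemma hb hk hGl' hG2 h2
    exact hGlne (Finset.image_eq_empty.mp this)
  have hGnGh : Gn = Gh := by
    have := Finset.filter_union_filter_not_eq (fun g => g.natAbs ≤ C₀) Gn
    rw [← hGldef, ← hGhdef, hGlempty] at this
    simpa using this.symm
  have hGngt : ∀ g ∈ Gn, C₀ < g.natAbs := by
    intro g hg
    rw [hGnGh] at hg
    have := (Finset.mem_filter.mp hg).2
    omega
  have hGnne : Gn.Nonempty := by
    rw [Finset.nonempty_iff_ne_empty]
    intro h
    rw [h] at hneq
    rw [sumk_empty] at hneq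
    rw [hneq] at hnK
    simp at hnK
    omega
  set r := rvec lab Gn with hr
  have hrpos : 0 < r := rvec_pos hGnne
  refine ⟨r, hrpos, fun m hm => ?_⟩
  set tm := sumk k (G' m) with htm
  have htmb : |tm| ≤ 2*K := le_trans (htm_bound m hm) (by omega)
  obtain ⟨hudig, hudisj⟩ := digits_union (hdig m) hGn
    (digits_natAbs_disjoint' (hC₀b m hm) hGngt)
  have husum : sumk k (G' m ∪ Gn) = tm + n := by
    rw [sumk_union hudisj, hneq]
  have hagm : (tm + n ∈ setA k R M) ↔ (tm ∈ setA k R M) := by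
    rw [← chiB_eq_chiB]
    exact hag tm htmb
  have hRtm : R tm = m := by rw [htm, R_of_digits hR (hdig m), hrv]
  have hRtmn : R (tm + n) = m + r := by
    rw [← husum, R_of_digits hR hudig, rvec_union hudisj, hrv, hr]
  have h1 : tm + n ∈ setA k R M ↔ m + r ∈ M := by
    rw [mem_setA, hRtmn]
    constructor
    · exact fun h => h.2
    · intro h
      refine ⟨?_, h⟩
      rw [← husum]
      exact digits_mem_IPk hb hk hudig
  have h2 : tm ∈ setA k R M ↔ m ∈ M := by
    rw [mem_setA, hRtm]
    constructor
    · exact fun h => h.2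
    · intro h
      refine ⟨?_, h⟩
      rw [htm]
      exact digits_mem_IPk hb hk (hdig m)
  rw [← h2, ← hagm, h1]

end backward


section backwardP
variable {b : ℕ} {k : ℤ → ℤ} {D : ℕ → Set ℕ} {lab : ℕ → ℕ} {R : ℤ → ℕ →₀ ℕ}
variable {M : Set (ℕ →₀ ℕ)}

lemma backward_xLP (hb : 3 ≤ b) (hk : IsExpanding b k) (hk1 : (b:ℤ)+1 < k 1)
    (hD : PartitionSpec D lab) (hR : LengthVecSpec k lab R) (hM : IsLabel M)
    (h0 : (0 : ℕ →₀ ℕ) ∈ M) (hrec : RecPt (xLP k R M)) :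
    ∀ F : Finset (ℕ →₀ ℕ), ∃ r : ℕ →₀ ℕ, 0 < r ∧ ∀ m ∈ F, (m ∈ M ↔ m + r ∈ M) := by
  classical
  intro F
  obtain ⟨G', C₀, K, n, hdig, hpos, hrv, hC₀b, hK, hK0, htm_bound, hnK, hag⟩ :=
    backward_setup hb hk hk1 hD hR hrec F
  set x := xLP k R M with hx
  have hx0 : x 0 = true := (chiB_iff _ _).mpr
    ⟨⟨zero_mem_IPk, by rw [R_zero hR]; exact h0⟩, zero_mem_IPkP⟩
  have hxn : x n = true := by
    have h := hag 0 (by simpa using hK0)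
    rw [zero_add] at h
    rw [h, hx0]
  have hnA : n ∈ setAP k R M := (chiB_iff _ _).mp hxn
  obtain ⟨Gn, hGn, hGnpos, hneq⟩ := (mem_IPkP_iff hb hk n).mp hnA.2
  set Gl := Gn.filter (fun g => g.natAbs ≤ C₀) with hGldef
  set Gh := Gn.filter (fun g => ¬ g.natAbs ≤ C₀) with hGhdef
  have hGl : Digits Gl := hGn.subset (Finset.filter_subset _ _)
  have hGh : Digits Gh := hGn.subset (Finset.filter_subset _ _)
  have hGlpos : ∀ g ∈ Gl, (0:ℤ) < g :=
    fun g hg => hGnpos g (Finset.filter_subset _ _ hg)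
  have hGhpos : ∀ g ∈ Gh, (0:ℤ) < g :=
    fun g hg => hGnpos g (Finset.filter_subset _ _ hg)
  have hsplit : sumk k Gl + sumk k Gh = sumk k Gn :=
    Finset.sum_filter_add_sum_filter_not _ _ k
  have hrsplit : rvec lab Gl + rvec lab Gh = rvec lab Gn :=
    Finset.sum_filter_add_sum_filter_not _ _ _
  have hGlK : |sumk k Gl| ≤ K := by
    rw [hK]
    exact sumk_bound hb hk hGl
      (fun a ha => Nat.lt_succ_of_le (Finset.mem_filter.mp ha).2)
  have hRn : R n = rvec lab Gn := by rw [hneq, R_of_digits hR hGn]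
  have hGhM : rvec lab Gh ∈ M := by
    apply hM (rvec lab Gh) (rvec lab Gn)
    · rw [← hrsplit]
      exact le_add_self
    · rw [← hRn]
      exact hnA.1.2
  have hGlempty : Gl = ∅ := by
    by_contra hGlne
    have hGlpos' : ∀ a ∈ Gl, ((0:ℕ):ℤ) < a := by
      intro a ha
      have := hGlpos a ha
      exact_mod_cast this
    have hSpos : (0:ℤ) < sumk k Gl := by
      have := sumk_gt hb hk hk1 hGlpos' (Finset.nonempty_iff_ne_empty.mpr hGlne)
      exact_mod_cast this
    set s := -(sumk k Gl) with hs
    have hsb : |s| ≤ 2*K := by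
      rw [hs, abs_neg]
      omega
    have husum : s + n = sumk k Gh := by
      rw [hneq, hs]
      omega
    have huA : s + n ∈ setAP k R M := by
      rw [mem_setAP]
      have hIPP : s + n ∈ IPkP k := by
        rw [husum]
        exact digits_mem_IPkP hb hk hGh hGhpos
      refine ⟨⟨IPkP_subset_IPk hIPP, ?_⟩, hIPP⟩
      rw [husum, R_of_digits hR hGh]
      exact hGhM
    have hxs : x s = true := by
      rw [← hag s hsb]
      exact (chiB_iff _ _).mpr huA
    have hsA : s ∈ setAP k R M := (chiB_iff _ _).mp hxs
    have := IPkP_nonneg hb hk hsA.2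
    omega
  have hGnGh : Gn = Gh := by
    have := Finset.filter_union_filter_not_eq (fun g => g.natAbs ≤ C₀) Gn
    rw [← hGldef, ← hGhdef, hGlempty] at this
    simpa using this.symm
  have hGngt : ∀ g ∈ Gn, C₀ < g.natAbs := by
    intro g hg
    rw [hGnGh] at hg
    have := (Finset.mem_filter.mp hg).2
    omega
  have hGnne : Gn.Nonempty := by
    rw [Finset.nonempty_iff_ne_empty]
    intro h
    rw [h] at hneq
    rw [sumk_empty] at hneq
    rw [hneq] at hnK
    simp at hnK
    omega
  set r := rvec lab Gn with hr
  have hrpos : 0 < r := rvec_pos hGnne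
  refine ⟨r, hrpos, fun m hm => ?_⟩
  set tm := sumk k (G' m) with htm
  have htmb : |tm| ≤ 2*K := le_trans (htm_bound m hm) (by omega)
  obtain ⟨hudig, hudisj⟩ := digits_union (hdig m) hGn
    (digits_natAbs_disjoint' (hC₀b m hm) hGngt)
  have hupos : ∀ g ∈ G' m ∪ Gn, (0:ℤ) < g := by
    intro g hg
    rcases Finset.mem_union.mp hg with h | h
    · exact hpos m g h
    · exact hGnpos g h
  have husum : sumk k (G' m ∪ Gn) = tm + n := by
    rw [sumk_union hudisj, hneq]
  have hagm : (tm + n ∈ setAP k R M) ↔ (tm ∈ setAP k R M) := by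
    rw [← chiB_eq_chiB]
    exact hag tm htmb
  have hRtm : R tm = m := by rw [htm, R_of_digits hR (hdig m), hrv]
  have hRtmn : R (tm + n) = m + r := by
    rw [← husum, R_of_digits hR hudig, rvec_union hudisj, hrv, hr]
  have h1 : tm + n ∈ setAP k R M ↔ m + r ∈ M := by
    rw [mem_setAP, hRtmn]
    constructor
    · exact fun h => h.1.2
    · intro h
      have hIPP : tm + n ∈ IPkP k := by
        rw [← husum]
        exact digits_mem_IPkP hb hk hudig hupos
      exact ⟨⟨IPkP_subset_IPk hIPP, h⟩, hIPP⟩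
  have h2 : tm ∈ setAP k R M ↔ m ∈ M := by
    rw [mem_setAP, hRtm]
    constructor
    · exact fun h => h.1.2
    · intro h
      have hIPP : tm ∈ IPkP k := by
        rw [htm]
        exact digits_mem_IPkP hb hk (hdig m) (hpos m)
      exact ⟨⟨IPkP_subset_IPk hIPP, h⟩, hIPP⟩
  rw [← h2, ← hagm, h1]

end backwardP


/-- With the standing labeled-subshift setup, for a label `𝓜` the following are equivalent:
`𝓜` is recurrent; `x[𝓜]` is a recurrent point for the shift; `x₊[𝓜]` is a recurrent point
for the shift. -/

theorem stmt17 (b : ℕ) (hb : 3 ≤ b) (k : ℤ → ℤ) (hk : IsExpanding b k)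
    (hk1 : (b : ℤ) + 1 < k 1)
    (D : ℕ → Set ℕ) (lab : ℕ → ℕ) (hD : PartitionSpec D lab)
    (R : ℤ → ℕ →₀ ℕ) (hR : LengthVecSpec k lab R)
    (M : Set (ℕ →₀ ℕ)) (hM : IsLabel M) :
    (RecurrentLabel M ↔ RecPt (xL k R M)) ∧
    (RecurrentLabel M ↔ RecPt (xLP k R M)) := by
  classical
  by_cases h0 : (0 : ℕ →₀ ℕ) ∈ M
  · have hQiff := recurrentLabel_iff M
    have hxl : RecurrentLabel M ↔ RecPt (xL k R M) := by
      constructor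
      · intro h
        apply recPt_of_forall
        intro T a
        obtain ⟨n, hn, h1, -⟩ := forward_shift hb hk hk1 hD hR (hQiff.mp h) T a
        exact ⟨n, hn, h1⟩
      · intro h
        exact hQiff.mpr (backward_xL hb hk hk1 hD hR hM h0 h)
    have hxlp : RecurrentLabel M ↔ RecPt (xLP k R M) := by
      constructor
      · intro h
        apply recPt_of_forall
        intro T a
        obtain ⟨n, hn, -, h2⟩ := forward_shift hb hk hk1 hD hR (hQiff.mp h) T a
        exact ⟨n, hn, h2⟩
      · intro h
        exact hQiff.mpr (backward_xLP hb hk hk1 hD hR hM h0 h)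
    exact ⟨hxl, hxlp⟩
  · have hMe : M = ∅ := by
      ext m
      simp only [Set.mem_empty_iff_false, iff_false]
      intro hm
      exact h0 (hM 0 m zero_le hm)
    have hrl : RecurrentLabel M := by
      apply (recurrentLabel_iff M).mpr
      intro F
      refine ⟨Finsupp.single 0 1, ?_, ?_⟩
      · refine lt_of_le_of_ne zero_le (Ne.symm ?_)
        intro h
        have := DFunLike.congr_fun h 0
        simp at this
      · intro m _
        simp [hMe]
    have hfalseL : ∀ t : ℤ, xL k R M t = false := by
      intro t
      apply Bool.eq_false_iff.mpr
      intro htrue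
      have := ((chiB_iff _ _).mp htrue).2
      rw [hMe] at this
      exact this
    have hfalseLP : ∀ t : ℤ, xLP k R M t = false := by
      intro t
      apply Bool.eq_false_iff.mpr
      intro htrue
      have := ((chiB_iff _ _).mp htrue).1.2
      rw [hMe] at this
      exact this
    have hrecL : RecPt (xL k R M) :=
      recPt_const_of_empty (fun n s => by rw [hfalseL, hfalseL])
    have hrecLP : RecPt (xLP k R M) :=
      recPt_const_of_empty (fun n s => by rw [hfalseLP, hfalseLP])
    exact ⟨iff_of_true hrl hrecL, iff_of_true hrl hrecLP⟩
end
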